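/- arXiv:2403.10142 — 13 statements merged into one kernel-verified Lean document; each statement's English description precedes it below -/
import Mathlib

section
/- Let f : ℝⁿ → ℝ be continuously differentiable and let g : ℝⁿ → ℝ ∪ {+∞} be proper and lower semicontinuous. Assume there exist λ' > λ̄ > 0 and c ∈ ℝ such that g(z) ≥ −‖z‖²/(2λ') − c for all z ∈ ℝⁿ (so λ̄ lies below the prox-boundedness threshold of g). Then for every bounded set M̄ ⊆ ℝⁿ the set S := ⋃ { T_λ(x) : x ∈ M̄, λ ∈ (0, λ̄] } is bounded. -/
open scoped RealInnerProductSpace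

/-- `ψ_λ(x,z) := f(x) + ⟪∇f(x), z−x⟫ + ‖z−x‖²/(2λ) + g(z)`, as an extended real. -/
noncomputable def psiFB {n : ℕ} (f : EuclideanSpace ℝ (Fin n) → ℝ)
    (g : EuclideanSpace ℝ (Fin n) → EReal) (lam : ℝ)
    (x z : EuclideanSpace ℝ (Fin n)) : EReal :=
  ((f x + ⟪gradient f x, z - x⟫ + ‖z - x‖ ^ 2 / (2 * lam) : ℝ) : EReal) + g z

/-- `T_λ(x)`: the set of global minimizers of `z ↦ ψ_λ(x,z)`. -/
def TFB {n : ℕ} (f : EuclideanSpace ℝ (Fin n) → ℝ)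
    (g : EuclideanSpace ℝ (Fin n) → EReal) (lam : ℝ)
    (x : EuclideanSpace ℝ (Fin n)) : Set (EuclideanSpace ℝ (Fin n)) :=
  {z | ∀ w, psiFB f g lam x z ≤ psiFB f g lam x w}

set_option maxHeartbeats 2000000

/-- **Boundedness of forward–backward steps over a bounded set.**
If `g` is proper, lsc, never `−∞` and minorized by `−‖·‖²/(2λ') − c` with `λ' > λ̄ > 0`
(so `λ̄` is below the prox-boundedness threshold of `g`), then for every bounded set `M̄`
the set `S = ⋃ {T_λ(x) : x ∈ M̄, 0 < λ ≤ λ̄}` is bounded. -/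
theorem stmt_1 (n : ℕ) (hn : 1 ≤ n)
    (f : EuclideanSpace ℝ (Fin n) → ℝ) (hf : ContDiff ℝ 1 f)
    (g : EuclideanSpace ℝ (Fin n) → EReal)
    (hgbot : ∀ z, g z ≠ ⊥) (hgproper : ∃ z, g z ≠ ⊤)
    (hglsc : LowerSemicontinuous g)
    (lam' lamBar : ℝ) (c : ℝ) (hlamBar : 0 < lamBar) (hlt : lamBar < lam')
    (hgminor : ∀ z, ((-‖z‖ ^ 2 / (2 * lam') - c : ℝ) : EReal) ≤ g z)
    (Mbar : Set (EuclideanSpace ℝ (Fin n))) (hMbar : Bornology.IsBounded Mbar) :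
    Bornology.IsBounded
      {z | ∃ x ∈ Mbar, ∃ lam ∈ Set.Ioc (0 : ℝ) lamBar, z ∈ TFB f g lam x} := by
  have hlam'pos : 0 < lam' := hlamBar.trans hlt
  obtain ⟨z₀, hz₀⟩ := hgproper
  set G : ℝ := (g z₀).toReal with hGdef
  have hGz : g z₀ = (G : EReal) := (EReal.coe_toReal hz₀ (hgbot z₀)).symm
  clear_value G
  -- bound on Mbar
  obtain ⟨R₀, hR₀⟩ := isBounded_iff_forall_norm_le.mp hMbar
  set R : ℝ := max R₀ 0 with hRdef
  clear_value R
  have hR : ∀ x ∈ Mbar, ‖x‖ ≤ R := fun x hx => (hR₀ x hx).trans (by rw [hRdef]; exact le_max_left _ _)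
  have hRnn : 0 ≤ R := by rw [hRdef]; exact le_max_right _ _
  -- continuity and boundedness of the gradient on Mbar
  have hgrad : Continuous (fun x => gradient f x) := by
    have h1 : Continuous (fderiv ℝ f) := hf.continuous_fderiv one_ne_zero
    unfold gradient
    exact (InnerProductSpace.toDual ℝ _).symm.continuous.comp h1
  have hcomp : IsCompact (closure Mbar) :=
    Metric.isCompact_of_isClosed_isBounded isClosed_closure hMbar.closure
  obtain ⟨K₀, hK₀⟩ := hcomp.exists_bound_of_continuousOn hgrad.continuousOn
  set K : ℝ := max K₀ 0 with hKdef
  clear_value K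
  have hKnn : 0 ≤ K := by rw [hKdef]; exact le_max_right _ _
  have hK : ∀ x ∈ Mbar, ‖gradient f x‖ ≤ K := fun x hx =>
    (hK₀ x (subset_closure hx)).trans (by rw [hKdef]; exact le_max_left _ _)
  -- constants
  set ε : ℝ := 1 / (2 * lamBar) - 1 / (2 * lam') with hεdef
  clear_value ε
  have hεpos : 0 < ε := by
    have : 1 / (2 * lam') < 1 / (2 * lamBar) := by
      apply one_div_lt_one_div_of_lt <;> nlinarith
    simp only [hεdef]; linarith
  set A : ℝ := R / lamBar + K with hAdef
  clear_value A
  set C : ℝ := (‖z₀‖ + R) ^ 2 / (2 * lamBar) + K * ‖z₀‖ + |c| + |G| with hCdef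
  clear_value C
  have hAnn : 0 ≤ A := by
    have : 0 ≤ R / lamBar := div_nonneg hRnn hlamBar.le
    simp only [hAdef]; linarith
  have hCnn : 0 ≤ C := by
    have h1 : 0 ≤ (‖z₀‖ + R) ^ 2 / (2 * lamBar) := div_nonneg (sq_nonneg _) (by linarith)
    have h2 : 0 ≤ K * ‖z₀‖ := mul_nonneg hKnn (norm_nonneg _)
    have := abs_nonneg c; have := abs_nonneg G
    simp only [hCdef]; linarith
  rw [isBounded_iff_forall_norm_le]
  refine ⟨max (2 * R + ‖z₀‖) (max 1 ((A + C) / ε)), ?_⟩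
  rintro z ⟨x, hx, lam, ⟨hlam0, hlamle⟩, hz⟩
  have hxR := hR x hx
  have hKx := hK x hx
  -- extract the real inequality from ψ(x,z) ≤ ψ(x,z₀)
  have hψ := hz z₀
  rw [psiFB, psiFB, hGz] at hψ
  set a : ℝ := f x + ⟪gradient f x, z - x⟫ + ‖z - x‖ ^ 2 / (2 * lam) with hadef
  set b : ℝ := f x + ⟪gradient f x, z₀ - x⟫ + ‖z₀ - x‖ ^ 2 / (2 * lam) with hbdef
  set m : ℝ := -‖z‖ ^ 2 / (2 * lam') - c with hmdef
  clear_value a b m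
  have key : a + m ≤ b + G := by
    have h1 : ((a + m : ℝ) : EReal) ≤ ((b + G : ℝ) : EReal) := by
      push_cast
      have hgm : ((m : ℝ) : EReal) ≤ g z := by rw [hmdef]; exact hgminor z
      calc (a : EReal) + (m : EReal) ≤ (a : EReal) + g z := add_le_add le_rfl hgm
      _ ≤ (b : EReal) + (G : EReal) := hψ
    exact_mod_cast h1
  -- case analysis
  by_cases hcase : ‖z - x‖ ≤ ‖z₀ - x‖
  · -- z is close to x, hence bounded directly
    have h1 : ‖z‖ ≤ ‖x‖ + ‖z - x‖ := by
      have e : x + (z - x) = z := by abel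
      calc ‖z‖ = ‖x + (z - x)‖ := by rw [e]
      _ ≤ ‖x‖ + ‖z - x‖ := norm_add_le _ _
    have h2 : ‖z₀ - x‖ ≤ ‖z₀‖ + ‖x‖ := norm_sub_le _ _
    have : ‖z‖ ≤ 2 * R + ‖z₀‖ := by linarith
    exact this.trans (le_max_left _ _)
  · push_neg at hcase
    -- from key, after cancellation:
    have key2 : (‖z - x‖ ^ 2 - ‖z₀ - x‖ ^ 2) / (2 * lam)
        ≤ ⟪gradient f x, z₀ - x⟫ - ⟪gradient f x, z - x⟫ + ‖z‖ ^ 2 / (2 * lam') + c + G := by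
      have e1 : (‖z - x‖ ^ 2 - ‖z₀ - x‖ ^ 2) / (2 * lam)
          = ‖z - x‖ ^ 2 / (2 * lam) - ‖z₀ - x‖ ^ 2 / (2 * lam) := sub_div _ _ _
      have e2 : -‖z‖ ^ 2 / (2 * lam') = -(‖z‖ ^ 2 / (2 * lam')) := neg_div _ _
      simp only [hadef, hbdef, hmdef] at key
      linarith [key]
    set t : ℝ := ‖z‖ with htdef
    clear_value t
    have htnn : 0 ≤ t := by rw [htdef]; exact norm_nonneg _
    have hd2 : 0 ≤ ‖z - x‖ ^ 2 - ‖z₀ - x‖ ^ 2 := by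
      nlinarith [norm_nonneg (z₀ - x), hcase]
    have key3 : (‖z - x‖ ^ 2 - ‖z₀ - x‖ ^ 2) / (2 * lamBar)
        ≤ (‖z - x‖ ^ 2 - ‖z₀ - x‖ ^ 2) / (2 * lam) := by
      gcongr <;> linarith
    -- inner product bound
    have hinner : ⟪gradient f x, z₀ - x⟫ - ⟪gradient f x, z - x⟫ ≤ K * (‖z₀‖ + t) := by
      have h1 : ⟪gradient f x, z₀ - x⟫ - ⟪gradient f x, z - x⟫ = ⟪gradient f x, z₀ - z⟫ := by
        rw [← inner_sub_right]; congr 1; abel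
      rw [h1]
      calc ⟪gradient f x, z₀ - z⟫ ≤ ‖gradient f x‖ * ‖z₀ - z‖ := real_inner_le_norm _ _
      _ ≤ K * (‖z₀‖ + t) := by
          have := norm_sub_le z₀ z
          apply mul_le_mul hKx (by simpa [htdef] using this) (norm_nonneg _) hKnn
    -- lower bound on ‖z - x‖²
    have hzx : t ^ 2 - 2 * R * t ≤ ‖z - x‖ ^ 2 := by
      have h1 : ‖z - x‖ ^ 2 = ‖z‖ ^ 2 - 2 * ⟪z, x⟫ + ‖x‖ ^ 2 := norm_sub_sq_real z x
      have h2 : ⟪z, x⟫ ≤ ‖z‖ * ‖x‖ := real_inner_le_norm _ _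
      have h3 : t * ‖x‖ ≤ t * R := mul_le_mul_of_nonneg_left hxR htnn
      have h4 : (0:ℝ) ≤ ‖x‖ ^ 2 := sq_nonneg _
      rw [← htdef] at h1 h2
      linarith
    -- upper bound on ‖z₀ - x‖²
    have hz0x : ‖z₀ - x‖ ^ 2 ≤ (‖z₀‖ + R) ^ 2 := by
      have h1 : ‖z₀ - x‖ ≤ ‖z₀‖ + R := (norm_sub_le _ _).trans (by linarith)
      exact pow_le_pow_left₀ (norm_nonneg _) h1 2
    -- assemble the quadratic inequality ε t² ≤ A t + C
    have hquad : ε * t ^ 2 ≤ A * t + C := by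
      have hmain : (‖z - x‖ ^ 2 - ‖z₀ - x‖ ^ 2) / (2 * lamBar)
          ≤ K * (‖z₀‖ + t) + t ^ 2 / (2 * lam') + c + G := by
        linarith [key3, key2, hinner]
      have hlb : (t ^ 2 - 2 * R * t - (‖z₀‖ + R) ^ 2) / (2 * lamBar)
          ≤ (‖z - x‖ ^ 2 - ‖z₀ - x‖ ^ 2) / (2 * lamBar) := by
        gcongr ?_ / _
        · linarith
      have habs1 : c ≤ |c| := le_abs_self c
      have habs2 : G ≤ |G| := le_abs_self G
      have hfinal : (t ^ 2 - 2 * R * t - (‖z₀‖ + R) ^ 2) / (2 * lamBar)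
          ≤ K * (‖z₀‖ + t) + t ^ 2 / (2 * lam') + |c| + |G| := by
        linarith
      have hbne : lamBar ≠ 0 := hlamBar.ne'
      have hl'ne : lam' ≠ 0 := hlam'pos.ne'
      have e1 : ε * t ^ 2 = t ^ 2 / (2 * lamBar) - t ^ 2 / (2 * lam') := by
        rw [hεdef]; field_simp
      have e2 : (t ^ 2 - 2 * R * t - (‖z₀‖ + R) ^ 2) / (2 * lamBar)
          = t ^ 2 / (2 * lamBar) - (R / lamBar) * t - (‖z₀‖ + R) ^ 2 / (2 * lamBar) := by
        field_simp
      have e3 : K * (‖z₀‖ + t) = K * ‖z₀‖ + K * t := by ring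
      simp only [hAdef, hCdef]
      have e4 : (R / lamBar + K) * t = (R / lamBar) * t + K * t := by ring
      linarith [hfinal]
    -- conclude
    have hbound : t ≤ max 1 ((A + C) / ε) := by
      by_cases ht1 : t ≤ 1
      · exact ht1.trans (le_max_left _ _)
      · push_neg at ht1
        have h1 : ε * t ^ 2 ≤ (A + C) * t := by nlinarith
        have h2 : ε * t ≤ A + C := by nlinarith
        have : t ≤ (A + C) / ε := (le_div_iff₀ hεpos).mpr (by linarith)
        exact this.trans (le_max_right _ _)
    exact hbound.trans (le_max_right _ _)
end

section
/- Let (P, W) be a PW-pair of real n×n matrices and let L := L(P,W) = {(P p, W p) : p ∈ ℝⁿ}. Then the orthogonal complement of L in ℝⁿ × ℝⁿ equals {(W s, −P s) : s ∈ ℝⁿ}, and consequently L is self-adjoint: L* = L. -/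
open Matrix

/-- A PW-pair: symmetric matrices `P`, `W` with `P² = P` and `W(I−P) = I−P`. -/
def IsPWPair {n : ℕ} (P W : Matrix (Fin n) (Fin n) ℝ) : Prop :=
  P.IsSymm ∧ W.IsSymm ∧ P * P = P ∧ W * (1 - P) = 1 - P

/-- The subspace `L(P,W) = {(Pp, Wp) : p ∈ ℝⁿ}` of `ℝⁿ × ℝⁿ`, as a set. -/
def LPW {n : ℕ} (P W : Matrix (Fin n) (Fin n) ℝ) :
    Set ((Fin n → ℝ) × (Fin n → ℝ)) :=
  {q | ∃ p : Fin n → ℝ, q = (P *ᵥ p, W *ᵥ p)}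

lemma symm_dot {n : ℕ} {M : Matrix (Fin n) (Fin n) ℝ} (hM : M.IsSymm)
    (p x : Fin n → ℝ) : (M *ᵥ p) ⬝ᵥ x = p ⬝ᵥ (M *ᵥ x) := by
  rw [dotProduct_comm, dotProduct_mulVec, ← mulVec_transpose, hM.eq, dotProduct_comm]

/-- **Self-adjointness of PW-subspaces.** For a PW-pair `(P,W)` with `L := L(P,W)`,
the orthogonal complement of `L` (w.r.t. the product Euclidean structure) equals
`{(Ws, −Ps) : s ∈ ℝⁿ}`, and consequently the adjoint subspace
`L* = {(−v, u) : (u,v) ∈ L⊥}` equals `L`. -/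
theorem stmt_4 (n : ℕ) (hn : 1 ≤ n)
    (P W : Matrix (Fin n) (Fin n) ℝ) (hPW : IsPWPair P W) :
    {q : (Fin n → ℝ) × (Fin n → ℝ) |
        ∀ p ∈ LPW P W, p.1 ⬝ᵥ q.1 + p.2 ⬝ᵥ q.2 = 0} =
      {q | ∃ s : Fin n → ℝ, q = (W *ᵥ s, -(P *ᵥ s))} ∧
    {q : (Fin n → ℝ) × (Fin n → ℝ) |
        ∃ u v : Fin n → ℝ,
          (∀ p ∈ LPW P W, p.1 ⬝ᵥ u + p.2 ⬝ᵥ v = 0) ∧ q = (-v, u)} = LPW P W := by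
  obtain ⟨hP, hW, hPP, hWQ⟩ := hPW
  -- matrix identities
  have hWP : W * P = W + P - 1 := by
    have h : W - W * P = 1 - P := by rw [mul_sub, mul_one] at hWQ; exact hWQ
    linear_combination (norm := abel) -h
  have hPWmul : P * W = W + P - 1 := by
    have := congrArg Matrix.transpose hWP
    simpa [Matrix.transpose_mul, hP.eq, hW.eq, Matrix.transpose_sub, Matrix.transpose_add]
      using this
  have hQW : (1 - P) * W = 1 - P := by
    have := congrArg Matrix.transpose hWQ
    simpa [Matrix.transpose_mul, hP.eq, hW.eq, Matrix.transpose_sub] using this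
  -- characterization of the orthogonal complement
  have perp : ∀ u v : Fin n → ℝ,
      (∀ p ∈ LPW P W, p.1 ⬝ᵥ u + p.2 ⬝ᵥ v = 0) ↔
        ∃ s, u = W *ᵥ s ∧ v = -(P *ᵥ s) := by
    intro u v
    constructor
    · intro h
      have hvec : P *ᵥ u + W *ᵥ v = 0 := by
        have h0 : ∀ x : Fin n → ℝ, x ⬝ᵥ (P *ᵥ u + W *ᵥ v) = 0 := by
          intro x
          have hx := h (P *ᵥ x, W *ᵥ x) ⟨x, rfl⟩
          simpa [dotProduct_add, symm_dot hP, symm_dot hW] using hx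
        exact dotProduct_self_eq_zero.mp (h0 (P *ᵥ u + W *ᵥ v))
      have hWv : W *ᵥ v = -(P *ᵥ u) := by
        rw [eq_neg_iff_add_eq_zero, add_comm]; exact hvec
      have hv : P *ᵥ v = v := by
        have h1 : (1 - P) *ᵥ (W *ᵥ v) = (1 - P) *ᵥ v := by
          rw [mulVec_mulVec, hQW]
        rw [hWv, mulVec_neg, mulVec_mulVec, sub_mul, one_mul, hPP, sub_self] at h1
        have h2 : v - P *ᵥ v = 0 := by
          have := h1.symm
          simpa [sub_mulVec, one_mulVec] using this
        exact (sub_eq_zero.mp h2).symm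
      refine ⟨u - P *ᵥ u - v, ?_, ?_⟩
      · rw [mulVec_sub, mulVec_sub, mulVec_mulVec, hWP, hWv, sub_mulVec, add_mulVec,
          one_mulVec]
        abel
      · rw [mulVec_sub, mulVec_sub, mulVec_mulVec, hPP, hv]
        abel
    · rintro ⟨s, rfl, rfl⟩
      rintro p ⟨x, rfl⟩
      simp only
      rw [symm_dot hP, symm_dot hW, mulVec_neg, dotProduct_neg, mulVec_mulVec, mulVec_mulVec,
        hPWmul, hWP, add_neg_cancel]
  constructor
  · ext q
    simp only [Set.mem_setOf_eq, perp q.1 q.2]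
    constructor
    · rintro ⟨s, h1, h2⟩
      exact ⟨s, Prod.ext h1 h2⟩
    · rintro ⟨s, hs⟩
      exact ⟨s, by rw [hs], by rw [hs]⟩
  · ext q
    simp only [Set.mem_setOf_eq]
    constructor
    · rintro ⟨u, v, h, rfl⟩
      obtain ⟨s, hu, hv⟩ := (perp u v).mp h
      exact ⟨s, by rw [hu, hv]; simp⟩
    · rintro ⟨p, rfl⟩
      exact ⟨W *ᵥ p, -(P *ᵥ p), (perp _ _).mpr ⟨p, rfl, rfl⟩, by simp⟩
end

section
/- Let (P₁, W₁) and (P₂, W₂) be PW-pairs of real n×n matrices representing the same subspace, i.e. {(P₁ p, W₁ p) : p ∈ ℝⁿ} = {(P₂ p, W₂ p) : p ∈ ℝⁿ}. Then P₁ = P₂ and W₁ = W₂. (Every subspace of the class Z_n^{P,W} is represented by exactly one PW-pair.) -/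
open Matrix

lemma mulVec_ext {n : ℕ} {A B : Matrix (Fin n) (Fin n) ℝ}
    (h : ∀ v, A *ᵥ v = B *ᵥ v) : A = B := by
  ext i j
  have := congrFun (h (Pi.single j 1)) i
  simpa [Matrix.mulVec_single] using this

/-- **Uniqueness of the PW-representation:** if two PW-pairs represent the same subspace
of `ℝⁿ × ℝⁿ`, then they coincide. -/
theorem stmt_5 (n : ℕ) (hn : 1 ≤ n)
    (P₁ W₁ P₂ W₂ : Matrix (Fin n) (Fin n) ℝ)
    (h₁ : IsPWPair P₁ W₁) (h₂ : IsPWPair P₂ W₂)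
    (heq : LPW P₁ W₁ = LPW P₂ W₂) :
    P₁ = P₂ ∧ W₁ = W₂ := by
  obtain ⟨hP₁s, hW₁s, hP₁, hW₁⟩ := h₁
  obtain ⟨hP₂s, hW₂s, hP₂, hW₂⟩ := h₂
  have key12 : ∀ p : Fin n → ℝ, ∃ q, P₁ *ᵥ p = P₂ *ᵥ q ∧ W₁ *ᵥ p = W₂ *ᵥ q := by
    intro p
    have hm : (P₁ *ᵥ p, W₁ *ᵥ p) ∈ LPW P₂ W₂ := by
      rw [← heq]; exact ⟨p, rfl⟩
    obtain ⟨q, hq⟩ := hm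
    exact ⟨q, congrArg Prod.fst hq, congrArg Prod.snd hq⟩
  have key21 : ∀ p : Fin n → ℝ, ∃ q, P₂ *ᵥ p = P₁ *ᵥ q ∧ W₂ *ᵥ p = W₁ *ᵥ q := by
    intro p
    have hm : (P₂ *ᵥ p, W₂ *ᵥ p) ∈ LPW P₁ W₁ := by
      rw [heq]; exact ⟨p, rfl⟩
    obtain ⟨q, hq⟩ := hm
    exact ⟨q, congrArg Prod.fst hq, congrArg Prod.snd hq⟩
  have hP21 : P₂ * P₁ = P₁ := by
    apply mulVec_ext
    intro v
    obtain ⟨q, h1, _⟩ := key12 v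
    calc (P₂ * P₁) *ᵥ v = P₂ *ᵥ (P₁ *ᵥ v) := by rw [Matrix.mulVec_mulVec]
      _ = P₂ *ᵥ (P₂ *ᵥ q) := by rw [h1]
      _ = (P₂ * P₂) *ᵥ q := by rw [Matrix.mulVec_mulVec]
      _ = P₂ *ᵥ q := by rw [hP₂]
      _ = P₁ *ᵥ v := h1.symm
  have hP12 : P₁ * P₂ = P₂ := by
    apply mulVec_ext
    intro v
    obtain ⟨q, h1, _⟩ := key21 v
    calc (P₁ * P₂) *ᵥ v = P₁ *ᵥ (P₂ *ᵥ v) := by rw [Matrix.mulVec_mulVec]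
      _ = P₁ *ᵥ (P₁ *ᵥ q) := by rw [h1]
      _ = (P₁ * P₁) *ᵥ q := by rw [Matrix.mulVec_mulVec]
      _ = P₁ *ᵥ q := by rw [hP₁]
      _ = P₂ *ᵥ v := h1.symm
  have hP : P₁ = P₂ := by
    have h1 : P₁ * P₂ = P₁ := by
      have := congrArg Matrix.transpose hP21
      rwa [Matrix.transpose_mul, hP₁s, hP₂s] at this
    rw [← hP12, h1]
  subst hP
  refine ⟨rfl, ?_⟩
  -- now show W₁ = W₂
  have hD1 : (W₁ - W₂) * (1 - P₁) = 0 := by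
    rw [sub_mul, hW₁, hW₂, sub_self]
  have hDP : (W₁ - W₂) * P₁ = W₁ - W₂ := by
    have := hD1
    rw [mul_sub, mul_one, sub_eq_zero] at this
    exact this.symm
  have hPD : P₁ * (W₁ - W₂) = W₁ - W₂ := by
    have := congrArg Matrix.transpose hDP
    rwa [Matrix.transpose_mul, Matrix.transpose_sub, hP₁s, hW₁s, hW₂s] at this
  have hPDP : P₁ * (W₁ - W₂) * P₁ = 0 := by
    have key : ∀ v, P₁ *ᵥ (W₁ *ᵥ (P₁ *ᵥ v)) = P₁ *ᵥ (W₂ *ᵥ (P₁ *ᵥ v)) := by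
      intro v
      obtain ⟨q, h1, h2⟩ := key12 (P₁ *ᵥ v)
      have h1' : P₁ *ᵥ v = P₁ *ᵥ q := by
        have : P₁ *ᵥ (P₁ *ᵥ v) = (P₁ * P₁) *ᵥ v := (Matrix.mulVec_mulVec _ _ _)
        rw [this, hP₁] at h1
        exact h1
      -- W₂ *ᵥ q = W₂ *ᵥ (P₁ *ᵥ q) + (q - P₁ *ᵥ q)
      have hW2q : W₂ *ᵥ q = W₂ *ᵥ (P₁ *ᵥ q) + (q - P₁ *ᵥ q) := by
        have h0 : (W₂ * (1 - P₁)) *ᵥ q = (1 - P₁) *ᵥ q := by rw [hW₂]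
        have e1 : (W₂ * (1 - P₁)) *ᵥ q = W₂ *ᵥ q - W₂ *ᵥ (P₁ *ᵥ q) := by
          rw [mul_sub, mul_one, Matrix.sub_mulVec, Matrix.mulVec_mulVec]
        have e2 : (1 - P₁) *ᵥ q = q - P₁ *ᵥ q := by
          rw [Matrix.sub_mulVec, Matrix.one_mulVec]
        rw [e1, e2] at h0
        linear_combination (norm := module) h0
      calc P₁ *ᵥ (W₁ *ᵥ (P₁ *ᵥ v)) = P₁ *ᵥ (W₂ *ᵥ q) := by rw [h2]
        _ = P₁ *ᵥ (W₂ *ᵥ (P₁ *ᵥ q)) + (P₁ *ᵥ q - P₁ *ᵥ (P₁ *ᵥ q)) := by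
            rw [hW2q, Matrix.mulVec_add, Matrix.mulVec_sub]
        _ = P₁ *ᵥ (W₂ *ᵥ (P₁ *ᵥ q)) := by
            have : P₁ *ᵥ (P₁ *ᵥ q) = P₁ *ᵥ q := by
              rw [Matrix.mulVec_mulVec, hP₁]
            rw [this, sub_self, add_zero]
        _ = P₁ *ᵥ (W₂ *ᵥ (P₁ *ᵥ v)) := by rw [← h1']
    have : P₁ * W₁ * P₁ = P₁ * W₂ * P₁ := by
      rw [mul_assoc, mul_assoc]
      apply mulVec_ext
      intro v
      simpa [Matrix.mulVec_mulVec] using key v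
    rw [mul_sub, sub_mul, this, sub_self]
  have hD : W₁ - W₂ = 0 := by
    calc W₁ - W₂ = P₁ * (W₁ - W₂) := hPD.symm
      _ = P₁ * ((W₁ - W₂) * P₁) := by rw [hDP]
      _ = P₁ * (W₁ - W₂) * P₁ := by rw [mul_assoc]
      _ = 0 := hPDP
  exact sub_eq_zero.mp hD
end

section
/- Let (P_k, W_k), k ∈ ℕ, be PW-pairs of real n×n matrices, let L_k := L(P_k, W_k) ⊆ ℝⁿ × ℝⁿ, and let L be a linear subspace of ℝⁿ × ℝⁿ such that the orthogonal projections of ℝⁿ × ℝⁿ onto L_k converge in operator norm to the orthogonal projection onto L. Then there exists a PW-pair (P, W) with L = L(P, W). (The class Z_n^{P,W} of subspaces represented by PW-pairs is closed in the metric space of subspaces with metric d(L₁,L₂) = ‖P_{L₁} − P_{L₂}‖.) -/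
open Matrix

/-- The Euclidean inner product on the product space `ℝⁿ × ℝⁿ`. -/
def inner2 {n : ℕ} (q r : (Fin n → ℝ) × (Fin n → ℝ)) : ℝ :=
  q.1 ⬝ᵥ r.1 + q.2 ⬝ᵥ r.2

/-- `Q` is the orthogonal projection of `ℝⁿ × ℝⁿ` onto the set `S`
(w.r.t. the product Euclidean structure): it maps into `S`, fixes `S`,
and is self-adjoint for the Euclidean inner product. -/
def IsOrthProj {n : ℕ}
    (Q : ((Fin n → ℝ) × (Fin n → ℝ)) →L[ℝ] ((Fin n → ℝ) × (Fin n → ℝ)))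
    (S : Set ((Fin n → ℝ) × (Fin n → ℝ))) : Prop :=
  (∀ v, Q v ∈ S) ∧ (∀ v ∈ S, Q v = v) ∧ (∀ u v, inner2 (Q u) v = inner2 u (Q v))

/-! ### Auxiliary material -/

abbrev E2 (n : ℕ) := (Fin n → ℝ) × (Fin n → ℝ)

/-- The "symplectic" rotation `J(x,y) = (-y, x)` on `ℝⁿ × ℝⁿ`. -/
def Jc (n : ℕ) : E2 n →L[ℝ] E2 n :=
  (-(ContinuousLinearMap.snd ℝ (Fin n → ℝ) (Fin n → ℝ))).prod
    (ContinuousLinearMap.fst ℝ (Fin n → ℝ) (Fin n → ℝ))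

lemma Jc_apply {n : ℕ} (v : E2 n) : Jc n v = (-v.2, v.1) := rfl

lemma inner2_sub_left {n : ℕ} (a b c : E2 n) :
    inner2 (a - b) c = inner2 a c - inner2 b c := by
  simp [inner2, sub_dotProduct]; ring

lemma inner2_zero_left {n : ℕ} (c : E2 n) : inner2 (0 : E2 n) c = 0 := by
  simp [inner2]

lemma inner2_self_eq_zero {n : ℕ} {a : E2 n} (h : inner2 a a = 0) : a = 0 := by
  have h1 : (0:ℝ) ≤ a.1 ⬝ᵥ a.1 := Finset.sum_nonneg fun i _ => mul_self_nonneg _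
  have h2 : (0:ℝ) ≤ a.2 ⬝ᵥ a.2 := Finset.sum_nonneg fun i _ => mul_self_nonneg _
  have e1 : a.1 ⬝ᵥ a.1 = 0 := by simp [inner2] at h; linarith
  have e2 : a.2 ⬝ᵥ a.2 = 0 := by simp [inner2] at h; linarith
  have := dotProduct_self_eq_zero.mp e1
  have := dotProduct_self_eq_zero.mp e2
  exact Prod.ext ‹a.1 = 0› ‹a.2 = 0›

lemma dot_shift {n : ℕ} {M : Matrix (Fin n) (Fin n) ℝ} (hM : Mᵀ = M) (x y : Fin n → ℝ) :
    (M *ᵥ x) ⬝ᵥ y = x ⬝ᵥ (M *ᵥ y) := by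
  have h : x ᵥ* Mᵀ = M *ᵥ x := Matrix.vecMul_transpose M x
  rw [hM] at h
  rw [Matrix.dotProduct_mulVec, h]

lemma dot_all_zero {n : ℕ} {v : Fin n → ℝ} (h : ∀ w, v ⬝ᵥ w = 0) : v = 0 := by
  funext i
  have := h (fun k => if k = i then 1 else 0)
  simpa [dotProduct] using this

section PW
variable {n : ℕ} {P W : Matrix (Fin n) (Fin n) ℝ}

lemma pw_WP (h : IsPWPair P W) : W * P = W - 1 + P := by
  obtain ⟨hP, hW, hPP, hWP⟩ := h
  have h3 := hWP
  rw [Matrix.mul_sub, Matrix.mul_one] at h3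
  have : W * P = W - (1 - P) := by rw [← h3]; abel
  rw [this]; abel

lemma pw_PW (h : IsPWPair P W) : P * W = W - 1 + P := by
  have h1 := pw_WP h
  have h2 : (W * P)ᵀ = (W - 1 + P)ᵀ := by rw [h1]
  rw [Matrix.transpose_mul, h.1.eq, h.2.1.eq, Matrix.transpose_add, Matrix.transpose_sub,
    Matrix.transpose_one, h.1.eq, h.2.1.eq] at h2
  exact h2

lemma pw_IPW (h : IsPWPair P W) : (1 - P) * W = 1 - P := by
  have h2 : (W * (1 - P))ᵀ = (1 - P)ᵀ := by rw [h.2.2.2]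
  rw [Matrix.transpose_mul, Matrix.transpose_sub, Matrix.transpose_one, h.1.eq, h.2.1.eq] at h2
  exact h2

/-- `L(P,W)` is closed under subtraction. -/
lemma lpw_sub {q r : E2 n} (hq : q ∈ LPW P W) (hr : r ∈ LPW P W) : q - r ∈ LPW P W := by
  obtain ⟨p, rfl⟩ := hq
  obtain ⟨p', rfl⟩ := hr
  exact ⟨p - p', by simp [Prod.ext_iff, Matrix.mulVec_sub]⟩

/-- Symmetry of the relation `L(P,W)`: `J(L) ⟂ L`. -/
lemma lpw_Jorth (h : IsPWPair P W) {q r : E2 n} (hq : q ∈ LPW P W) (hr : r ∈ LPW P W) :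
    inner2 (Jc n q) r = 0 := by
  obtain ⟨p, rfl⟩ := hq
  obtain ⟨p', rfl⟩ := hr
  have e1 : (W *ᵥ p) ⬝ᵥ (P *ᵥ p') = p ⬝ᵥ ((W * P) *ᵥ p') := by
    rw [dot_shift h.2.1.eq, Matrix.mulVec_mulVec]
  have e2 : (P *ᵥ p) ⬝ᵥ (W *ᵥ p') = p ⬝ᵥ ((P * W) *ᵥ p') := by
    rw [dot_shift h.1.eq, Matrix.mulVec_mulVec]
  simp only [inner2, Jc_apply, neg_dotProduct]
  rw [e1, e2, pw_PW h, pw_WP h]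
  ring

/-- If `(a,b) ⟂ L(P,W)` then `J(a,b) = (-b, a) ∈ L(P,W)`. -/
lemma lpw_Jmem (h : IsPWPair P W) {a b : Fin n → ℝ} (hab : P *ᵥ a + W *ᵥ b = 0) :
    ((-b, a) : E2 n) ∈ LPW P W := by
  have hWb : W *ᵥ b = -(P *ᵥ a) := by
    have h0 : W *ᵥ b + P *ᵥ a = 0 := by rw [add_comm]; exact hab
    exact eq_neg_of_add_eq_zero_left h0
  have hPb : P *ᵥ b = b := by
    have h1 : (1 - P) *ᵥ (W *ᵥ b) = (1 - P) *ᵥ b := by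
      rw [Matrix.mulVec_mulVec, pw_IPW h]
    have h2 : (1 - P) *ᵥ (P *ᵥ a) = 0 := by
      rw [Matrix.mulVec_mulVec, Matrix.sub_mul, Matrix.one_mul, h.2.2.1, sub_self,
        Matrix.zero_mulVec]
    rw [hWb, Matrix.mulVec_neg, h2, neg_zero] at h1
    have h3 := h1.symm
    rw [Matrix.sub_mulVec, Matrix.one_mulVec] at h3
    have h4 : b - P *ᵥ b = 0 := h3
    have := sub_eq_zero.mp h4
    exact this.symm
  refine ⟨-b + (a - P *ᵥ a), ?_⟩
  have hP : P *ᵥ (-b + (a - P *ᵥ a)) = -b := by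
    rw [Matrix.mulVec_add, Matrix.mulVec_sub, Matrix.mulVec_neg, hPb, Matrix.mulVec_mulVec,
      h.2.2.1, sub_self, add_zero]
  have hW : W *ᵥ (-b + (a - P *ᵥ a)) = a := by
    have h5 : W *ᵥ (a - P *ᵥ a) = a - P *ᵥ a := by
      have h6 : (1 - P) *ᵥ a = a - P *ᵥ a := by
        rw [Matrix.sub_mulVec, Matrix.one_mulVec]
      rw [← h6, Matrix.mulVec_mulVec, h.2.2.2]
    rw [Matrix.mulVec_add, Matrix.mulVec_neg, hWb, h5, neg_neg]
    abel
  rw [Prod.ext_iff, hP, hW]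
  exact ⟨rfl, rfl⟩

end PW

section Proj
variable {n : ℕ}

lemma residual_orth {Q : E2 n →L[ℝ] E2 n} {S : Set (E2 n)} (hQ : IsOrthProj Q S)
    (v : E2 n) : ∀ s ∈ S, inner2 (v - Q v) s = 0 := by
  obtain ⟨hmem, hfix, hsa⟩ := hQ
  intro s hs
  have h1 : inner2 (Q v) s = inner2 v s := by rw [hsa v s, hfix s hs]
  rw [inner2_sub_left, h1, sub_self]

lemma orthproj_eq {Q : E2 n →L[ℝ] E2 n} {S : Set (E2 n)} (hQ : IsOrthProj Q S)
    (hsub : ∀ a ∈ S, ∀ b ∈ S, a - b ∈ S) {v w : E2 n} (hw : w ∈ S)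
    (horth : ∀ s ∈ S, inner2 (v - w) s = 0) : Q v = w := by
  have hres := residual_orth hQ v
  obtain ⟨hmem, hfix, hsa⟩ := hQ
  have hd : Q v - w ∈ S := hsub _ (hmem v) _ hw
  have he : Q v - w = (v - w) - (v - Q v) := by abel
  have h0 : inner2 (Q v - w) (Q v - w) = 0 := by
    nth_rewrite 1 [he]
    rw [inner2_sub_left, horth _ hd, hres _ hd, sub_self]
  have := inner2_self_eq_zero h0
  exact sub_eq_zero.mp this

/-- The key anticommutation identity for projections onto `L(P,W)`. -/
lemma key_anticomm {P W : Matrix (Fin n) (Fin n) ℝ} (h : IsPWPair P W)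
    {Q : E2 n →L[ℝ] E2 n} (hQ : IsOrthProj Q (LPW P W)) (v : E2 n) :
    Q (Jc n v) + Jc n (Q v) = Jc n v := by
  have hres := residual_orth hQ v
  set a := (v - Q v).1 with ha
  set b := (v - Q v).2 with hb
  have hab : P *ᵥ a + W *ᵥ b = 0 := by
    apply dot_all_zero
    intro p
    have h1 := hres (P *ᵥ p, W *ᵥ p) ⟨p, rfl⟩
    simp only [inner2] at h1
    rw [add_dotProduct, dot_shift h.1.eq, dot_shift h.2.1.eq]
    exact h1
  have hwmem : ((-b, a) : E2 n) ∈ LPW P W := lpw_Jmem h hab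
  have hJw : Jc n (v - Q v) = ((-b, a) : E2 n) := rfl
  have hQJ : Q (Jc n v) = Jc n (v - Q v) := by
    apply orthproj_eq hQ (fun x hx y hy => lpw_sub hx hy)
    · rw [hJw]; exact hwmem
    · intro s hs
      have : Jc n v - Jc n (v - Q v) = Jc n (Q v) := by rw [← map_sub]; congr 1; abel
      rw [this]
      exact lpw_Jorth h (hQ.1 v) hs
  rw [hQJ, map_sub]
  abel

end Proj

section Mat
variable {n : ℕ}

lemma mulVec_toMatrix' (f : (Fin n → ℝ) →ₗ[ℝ] (Fin n → ℝ)) (x : Fin n → ℝ) :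
    (LinearMap.toMatrix' f) *ᵥ x = f x := by
  rw [← Matrix.toLin'_apply, Matrix.toLin'_toMatrix']

lemma toMatrix'_isSymm {f : (Fin n → ℝ) →ₗ[ℝ] (Fin n → ℝ)}
    (h : ∀ x y, f x ⬝ᵥ y = x ⬝ᵥ f y) : (LinearMap.toMatrix' f).IsSymm := by
  have edotr : ∀ (v : Fin n → ℝ) (i : Fin n),
      v ⬝ᵥ (fun k => if k = i then (1:ℝ) else 0) = v i := by
    intro v i; simp [dotProduct]
  have edotl : ∀ (v : Fin n → ℝ) (i : Fin n),
      (fun k => if k = i then (1:ℝ) else 0) ⬝ᵥ v = v i := by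
    intro v i; simp [dotProduct]
  show (LinearMap.toMatrix' f)ᵀ = LinearMap.toMatrix' f
  ext i j
  rw [Matrix.transpose_apply, LinearMap.toMatrix'_apply, LinearMap.toMatrix'_apply]
  have hs : ∀ i : Fin n, (Pi.single i (1:ℝ) : Fin n → ℝ) = fun j' => if j' = i then 1 else 0 :=
    fun i => by ext j'; simp [Pi.single_apply]
  rw [hs, hs]
  calc f (fun j' => if j' = i then (1:ℝ) else 0) j
      = f (fun j' => if j' = i then (1:ℝ) else 0) ⬝ᵥ (fun k => if k = j then (1:ℝ) else 0) := by
        rw [edotr]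
    _ = (fun j' => if j' = i then (1:ℝ) else 0) ⬝ᵥ f (fun k => if k = j then (1:ℝ) else 0) :=
        h _ _
    _ = f (fun j' => if j' = j then (1:ℝ) else 0) i := edotl _ _

end Mat

section Euc
variable {n : ℕ}

noncomputable def eqv (n : ℕ) : EuclideanSpace ℝ (Fin n) ≃ₗ[ℝ] (Fin n → ℝ) :=
  WithLp.linearEquiv 2 ℝ (Fin n → ℝ)

lemma inner_eq_dot (u v : EuclideanSpace ℝ (Fin n)) :
    (inner ℝ u v : ℝ) = (eqv n u) ⬝ᵥ (eqv n v) := by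
  simp [PiLp.inner_apply, dotProduct, RCLike.inner_apply, eqv]
  exact Finset.sum_congr rfl fun i _ => mul_comm _ _

noncomputable def projLin (D : Submodule ℝ (Fin n → ℝ)) :
    (Fin n → ℝ) →ₗ[ℝ] (Fin n → ℝ) :=
  (eqv n).toLinearMap
    ∘ₗ (D.comap (eqv n).toLinearMap).subtype
    ∘ₗ (Submodule.orthogonalProjectionOnto (D.comap (eqv n).toLinearMap)).toLinearMap
    ∘ₗ (eqv n).symm.toLinearMap

lemma projLin_mem (D : Submodule ℝ (Fin n → ℝ)) (x : Fin n → ℝ) : projLin D x ∈ D := by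
  exact ((Submodule.orthogonalProjectionOnto (D.comap (eqv n).toLinearMap)) ((eqv n).symm x)).2

lemma projLin_fix (D : Submodule ℝ (Fin n → ℝ)) {x : Fin n → ℝ} (hx : x ∈ D) :
    projLin D x = x := by
  have hx2 : (eqv n).symm x ∈ D.comap (eqv n).toLinearMap := by
    simp only [Submodule.mem_comap, LinearEquiv.coe_coe, LinearEquiv.apply_symm_apply]
    exact hx
  have := Submodule.orthogonalProjectionOnto_mem_subspace_eq_self
    (K := D.comap (eqv n).toLinearMap) ⟨(eqv n).symm x, hx2⟩
  show (eqv n) ((Submodule.orthogonalProjectionOnto (D.comap (eqv n).toLinearMap)) ((eqv n).symm x) : _) = x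
  rw [this]
  exact (eqv n).apply_symm_apply x

lemma projLin_sa (D : Submodule ℝ (Fin n → ℝ)) (x y : Fin n → ℝ) :
    projLin D x ⬝ᵥ y = x ⬝ᵥ projLin D y := by
  have h := Submodule.inner_starProjection_left_eq_right (D.comap (eqv n).toLinearMap)
    ((eqv n).symm x) ((eqv n).symm y)
  rw [Submodule.starProjection_apply, Submodule.starProjection_apply] at h
  rw [inner_eq_dot, inner_eq_dot] at h
  exact h

lemma projLin_idem (D : Submodule ℝ (Fin n → ℝ)) (x : Fin n → ℝ) :
    projLin D (projLin D x) = projLin D x :=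
  projLin_fix D (projLin_mem D x)

lemma projLin_ker (D : Submodule ℝ (Fin n → ℝ)) {x : Fin n → ℝ}
    (hx : ∀ d ∈ D, x ⬝ᵥ d = 0) : projLin D x = 0 := by
  have h1 : projLin D x ⬝ᵥ projLin D x = 0 := by
    rw [projLin_sa D x (projLin D x), projLin_idem]
    exact hx _ (projLin_mem D x)
  exact dotProduct_self_eq_zero.mp h1

end Euc

/-- **Closedness of the class `Z_n^{P,W}`.** If the orthogonal projections onto subspaces
`L_k = L(P_k, W_k)` represented by PW-pairs converge (in operator norm) to the orthogonal
projection onto a linear subspace `L` of `ℝⁿ × ℝⁿ`, then `L` is itself represented by a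
PW-pair. -/
theorem stmt_6 (n : ℕ) (hn : 1 ≤ n)
    (P W : ℕ → Matrix (Fin n) (Fin n) ℝ)
    (hPW : ∀ k, IsPWPair (P k) (W k))
    (Q : ℕ → (((Fin n → ℝ) × (Fin n → ℝ)) →L[ℝ] ((Fin n → ℝ) × (Fin n → ℝ))))
    (hQ : ∀ k, IsOrthProj (Q k) (LPW (P k) (W k)))
    (L : Submodule ℝ ((Fin n → ℝ) × (Fin n → ℝ)))
    (QL : ((Fin n → ℝ) × (Fin n → ℝ)) →L[ℝ] ((Fin n → ℝ) × (Fin n → ℝ)))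
    (hQL : IsOrthProj QL (L : Set ((Fin n → ℝ) × (Fin n → ℝ))))
    (hconv : Filter.Tendsto Q Filter.atTop (nhds QL)) :
    ∃ P' W' : Matrix (Fin n) (Fin n) ℝ,
      IsPWPair P' W' ∧ (L : Set ((Fin n → ℝ) × (Fin n → ℝ))) = LPW P' W' := by
  classical
  -- Step 1: the anticommutation identity passes to the limit.
  have hacomm : ∀ v, QL (Jc n v) + Jc n (QL v) = Jc n v := by
    intro v
    have h1 : Filter.Tendsto (fun k => Q k (Jc n v) + Jc n (Q k v)) Filter.atTop
        (nhds (QL (Jc n v) + Jc n (QL v))) := by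
      apply Filter.Tendsto.add
      · exact ((ContinuousLinearMap.apply ℝ (E2 n) (Jc n v)).continuous.tendsto QL).comp hconv
      · exact ((Jc n).continuous.tendsto (QL v)).comp
          (((ContinuousLinearMap.apply ℝ (E2 n) v).continuous.tendsto QL).comp hconv)
    have h2 : (fun k => Q k (Jc n v) + Jc n (Q k v)) = fun _ => Jc n v :=
      funext fun k => key_anticomm (hPW k) (hQ k) v
    rw [h2] at h1
    exact tendsto_nhds_unique h1 tendsto_const_nhds
  obtain ⟨hQLmem, hQLfix, hQLsa⟩ := hQL
  have hQL2 : ∀ v, QL (QL v) = QL v := fun v => hQLfix _ (hQLmem v)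
  -- Step 2: `L` is a self-adjoint (Lagrangian) relation.
  have hsymL : ∀ q ∈ L, ∀ r ∈ L, q.1 ⬝ᵥ r.2 = q.2 ⬝ᵥ r.1 := by
    intro q hq r hr
    have h0 : QL (Jc n q) = 0 := by
      have h2 := hacomm q
      rw [hQLfix q hq] at h2
      exact add_eq_right.mp h2
    have h1 : inner2 (Jc n q) r = 0 := by
      calc inner2 (Jc n q) r = inner2 (Jc n q) (QL r) := by rw [hQLfix r hr]
        _ = inner2 (QL (Jc n q)) r := (hQLsa _ _).symm
        _ = 0 := by rw [h0]; exact inner2_zero_left r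
    simp only [inner2, Jc_apply, neg_dotProduct] at h1
    linarith
  have hmaxL : ∀ w : E2 n, (∀ r ∈ L, inner2 (Jc n w) r = 0) → w ∈ L := by
    intro w hw
    have h0 : QL (Jc n w) = 0 := by
      apply inner2_self_eq_zero
      rw [hQLsa (Jc n w) (QL (Jc n w)), hQL2]
      exact hw _ (hQLmem _)
    have h2 := hacomm w
    rw [h0, zero_add] at h2
    have h3 : QL w = w := by
      rw [Jc_apply, Jc_apply, Prod.ext_iff] at h2
      exact Prod.ext h2.2 (neg_inj.mp h2.1)
    rw [← h3]; exact hQLmem w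
  -- Step 3: construct the PW-pair representing `L`.
  set D : Submodule ℝ (Fin n → ℝ) := L.map (LinearMap.fst ℝ (Fin n → ℝ) (Fin n → ℝ)) with hD
  set pl : (Fin n → ℝ) →ₗ[ℝ] (Fin n → ℝ) := projLin D with hpl
  -- a linear section of the first-coordinate map `L → D`
  set π : ↥L →ₗ[ℝ] ↥D :=
    LinearMap.codRestrict D ((LinearMap.fst ℝ (Fin n → ℝ) (Fin n → ℝ)) ∘ₗ L.subtype)
      (fun w => Submodule.mem_map_of_mem w.2) with hπ
  have hπsurj : Function.Surjective π := by
    rintro ⟨d, hd⟩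
    obtain ⟨q, hq, hq1⟩ := hd
    exact ⟨⟨q, hq⟩, Subtype.ext hq1⟩
  obtain ⟨σ, hσ⟩ := Module.projective_lifting_property π LinearMap.id hπsurj
  have hσ1 : ∀ d : ↥D, ((σ d : ↥L) : E2 n).1 = (d : Fin n → ℝ) := by
    intro d
    exact congrArg Subtype.val (LinearMap.congr_fun hσ d)
  set pd : (Fin n → ℝ) →ₗ[ℝ] ↥D := LinearMap.codRestrict D pl (projLin_mem D) with hpd
  set al : (Fin n → ℝ) →ₗ[ℝ] (Fin n → ℝ) :=
    pl ∘ₗ (LinearMap.snd ℝ (Fin n → ℝ) (Fin n → ℝ)) ∘ₗ L.subtype ∘ₗ σ ∘ₗ pd with hal_def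
  set wl : (Fin n → ℝ) →ₗ[ℝ] (Fin n → ℝ) := al + (LinearMap.id - pl) with hwl_def
  have hal : ∀ x, al x = pl ((σ (pd x) : ↥L) : E2 n).2 := fun _ => rfl
  have hwl : ∀ x, wl x = al x + (x - pl x) := fun _ => rfl
  have hσ2 : ∀ x : Fin n → ℝ, ((σ (pd x) : ↥L) : E2 n).1 = pl x := fun x => hσ1 (pd x)
  -- self-adjointness of `wl`
  have halsa : ∀ x y, al x ⬝ᵥ y = x ⬝ᵥ al y := by
    intro x y
    have hqx : ((σ (pd x) : ↥L) : E2 n) ∈ L := (σ (pd x)).2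
    have hqy : ((σ (pd y) : ↥L) : E2 n) ∈ L := (σ (pd y)).2
    have hrel := hsymL _ hqx _ hqy
    calc al x ⬝ᵥ y = pl ((σ (pd x) : ↥L) : E2 n).2 ⬝ᵥ y := by rw [hal]
      _ = ((σ (pd x) : ↥L) : E2 n).2 ⬝ᵥ pl y := projLin_sa D _ y
      _ = ((σ (pd x) : ↥L) : E2 n).2 ⬝ᵥ ((σ (pd y) : ↥L) : E2 n).1 := by rw [hσ2 y]
      _ = ((σ (pd x) : ↥L) : E2 n).1 ⬝ᵥ ((σ (pd y) : ↥L) : E2 n).2 := hrel.symm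
      _ = pl x ⬝ᵥ ((σ (pd y) : ↥L) : E2 n).2 := by rw [hσ2 x]
      _ = x ⬝ᵥ pl ((σ (pd y) : ↥L) : E2 n).2 := projLin_sa D x _
      _ = x ⬝ᵥ al y := by rw [hal]
  have hwlsa : ∀ x y, wl x ⬝ᵥ y = x ⬝ᵥ wl y := by
    intro x y
    rw [hwl x, hwl y, add_dotProduct, dotProduct_add, sub_dotProduct,
      dotProduct_sub, halsa, projLin_sa D x y]
  refine ⟨LinearMap.toMatrix' pl, LinearMap.toMatrix' wl, ⟨?_, ?_, ?_, ?_⟩, ?_⟩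
  · exact toMatrix'_isSymm (projLin_sa D)
  · exact toMatrix'_isSymm hwlsa
  · rw [← LinearMap.toMatrix'_comp]
    congr 1
    exact LinearMap.ext fun x => projLin_idem D x
  · have h1 : (1 : Matrix (Fin n) (Fin n) ℝ) - LinearMap.toMatrix' pl
        = LinearMap.toMatrix' (LinearMap.id - pl) := by
      rw [map_sub, LinearMap.toMatrix'_id]
    rw [h1, ← LinearMap.toMatrix'_comp]
    congr 1
    apply LinearMap.ext
    intro x
    have hz : pl (x - pl x) = 0 := by rw [map_sub, projLin_idem, sub_self]
    have hpdz : pd (x - pl x) = 0 := Subtype.ext hz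
    show wl (x - pl x) = x - pl x
    rw [hwl, hal, hpdz, map_zero, hz, sub_zero,
      show (((0 : ↥L) : E2 n)).2 = (0 : Fin n → ℝ) from rfl, map_zero, zero_add]
  · -- the set equality
    apply Set.ext
    rintro ⟨x, y⟩
    constructor
    · intro hq
      have hxD : x ∈ D := Submodule.mem_map_of_mem hq
      refine ⟨x + (y - pl y), ?_⟩
      have hplp : pl (x + (y - pl y)) = x := by
        rw [map_add, map_sub, projLin_idem, sub_self, add_zero, projLin_fix D hxD]
      have hqmem : ((σ (pd (x + (y - pl y))) : ↥L) : E2 n) ∈ L := (σ _).2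
      have hq1 : ((σ (pd (x + (y - pl y))) : ↥L) : E2 n).1 = x := by rw [hσ2, hplp]
      have hm : ((0 : Fin n → ℝ), y - ((σ (pd (x + (y - pl y))) : ↥L) : E2 n).2) ∈ L := by
        have hsub := L.sub_mem hq hqmem
        have he : ((x, y) : E2 n) - ((σ (pd (x + (y - pl y))) : ↥L) : E2 n)
            = (0, y - ((σ (pd (x + (y - pl y))) : ↥L) : E2 n).2) := by
          apply Prod.ext
          · show x - ((σ (pd (x + (y - pl y))) : ↥L) : E2 n).1 = 0
            rw [hq1, sub_self]
          · rfl
        rwa [he] at hsub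
      have hmD : ∀ d ∈ D, (y - ((σ (pd (x + (y - pl y))) : ↥L) : E2 n).2) ⬝ᵥ d = 0 := by
        intro d hd
        obtain ⟨r, hr, hr1⟩ := hd
        have h5 := hsymL _ hm _ hr
        simp only [zero_dotProduct] at h5
        rw [← hr1]
        exact h5.symm
      have hply : pl ((σ (pd (x + (y - pl y))) : ↥L) : E2 n).2 = pl y := by
        have h6 : pl (y - ((σ (pd (x + (y - pl y))) : ↥L) : E2 n).2) = 0 :=
          projLin_ker D hmD
        rw [map_sub] at h6
        have := sub_eq_zero.mp h6
        exact this.symm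
      have hwlp : wl (x + (y - pl y)) = y := by
        rw [hwl, hal, hply, hplp]
        abel
      rw [mulVec_toMatrix', mulVec_toMatrix', hplp, hwlp]
    · rintro ⟨p, hp⟩
      rw [Prod.ext_iff] at hp
      obtain ⟨hp1, hp2⟩ := hp
      have hp1' : x = pl p := by simpa [mulVec_toMatrix'] using hp1
      have hp2' : y = wl p := by simpa [mulVec_toMatrix'] using hp2
      have hMD : ∀ z : Fin n → ℝ, ((0 : Fin n → ℝ), z - pl z) ∈ L := by
        intro z
        apply hmaxL
        intro r hr
        have hr1D : r.1 ∈ D := Submodule.mem_map_of_mem hr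
        have h7 : (z - pl z) ⬝ᵥ r.1 = 0 := by
          rw [sub_dotProduct, projLin_sa D z r.1, projLin_fix D hr1D, sub_self]
        show -(z - pl z) ⬝ᵥ r.1 + (0 : Fin n → ℝ) ⬝ᵥ r.2 = 0
        rw [neg_dotProduct, h7, zero_dotProduct, neg_zero, add_zero]
      have hqmem : ((σ (pd p) : ↥L) : E2 n) ∈ L := (σ (pd p)).2
      have h1 : ((x, y) : E2 n) = ((σ (pd p) : ↥L) : E2 n)
          + (((0 : Fin n → ℝ), p - pl p) - ((0 : Fin n → ℝ), ((σ (pd p) : ↥L) : E2 n).2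
              - pl ((σ (pd p) : ↥L) : E2 n).2)) := by
        apply Prod.ext
        · show x = ((σ (pd p) : ↥L) : E2 n).1 + ((0 : Fin n → ℝ) - 0)
          rw [hσ2, sub_self, add_zero]
          exact hp1'
        · show y = ((σ (pd p) : ↥L) : E2 n).2 + ((p - pl p)
            - (((σ (pd p) : ↥L) : E2 n).2 - pl ((σ (pd p) : ↥L) : E2 n).2))
          rw [hp2', hwl, hal]
          abel
      rw [h1]
      exact L.add_mem hqmem (L.sub_mem (hMD p) (hMD _))
end

section
/- Let (P, W) be a PW-pair of real n×n matrices and let z*, s̄ ∈ ℝⁿ. Then the following are equivalent: (i) W s̄ = −P z*; (ii) s̄ belongs to the range of P and W s̄ + z* belongs to the orthogonal complement of the range of P (i.e. s̄ is a stationary point of the quadratic program min_s ½⟨s, W s⟩ + ⟨z*, s⟩ subject to s ∈ range P). -/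
open Matrix

/-- **Characterization of the Newton equation as stationarity of a quadratic program.**
For a PW-pair `(P,W)` and vectors `z*, s̄`: `W s̄ = −P z*` iff `s̄ ∈ range P` and
`W s̄ + z*` is orthogonal to `range P` (i.e. `s̄` is a stationary point of
`min ½⟨s, Ws⟩ + ⟨z*, s⟩ s.t. s ∈ range P`). -/
theorem stmt_7 (n : ℕ) (hn : 1 ≤ n)
    (P W : Matrix (Fin n) (Fin n) ℝ) (hPW : IsPWPair P W)
    (zstar sbar : Fin n → ℝ) :
    W *ᵥ sbar = -(P *ᵥ zstar) ↔
      ((∃ p : Fin n → ℝ, sbar = P *ᵥ p) ∧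
        ∀ p : Fin n → ℝ, (W *ᵥ sbar + zstar) ⬝ᵥ (P *ᵥ p) = 0) := by
  obtain ⟨hP, hW, hPP, hWIP⟩ := hPW
  -- (1-P) * W = 1 - P, by transposing
  have hIPW : (1 - P) * W = 1 - P := by
    have := congrArg Matrix.transpose hWIP
    simpa [Matrix.transpose_mul, Matrix.transpose_sub, hP.eq, hW.eq] using this
  constructor
  · rintro h
    have hfix : P *ᵥ sbar = sbar := by
      -- (1-P) *ᵥ sbar = (1-P) *ᵥ (W *ᵥ sbar) = (1-P) *ᵥ (-(P *ᵥ zstar)) = 0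
      have h1 : (1 - P) *ᵥ sbar = (1 - P) *ᵥ (W *ᵥ sbar) := by
        rw [Matrix.mulVec_mulVec, hIPW]
      have h2 : (1 - P) *ᵥ (-(P *ᵥ zstar)) = 0 := by
        have : (1 - P) * P = 0 := by
          rw [Matrix.sub_mul, Matrix.one_mul, hPP, sub_self]
        rw [Matrix.mulVec_neg, Matrix.mulVec_mulVec, this, Matrix.zero_mulVec, neg_zero]
      have h3 : (1 - P) *ᵥ sbar = 0 := by rw [h1, h, h2]
      have h4 : sbar - P *ᵥ sbar = 0 := by
        simpa [Matrix.sub_mulVec, Matrix.one_mulVec] using h3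
      exact (sub_eq_zero.mp h4).symm
    refine ⟨⟨sbar, hfix.symm⟩, fun p => ?_⟩
    have hz : P *ᵥ (W *ᵥ sbar + zstar) = 0 := by
      rw [h]
      simp [Matrix.mulVec_add, Matrix.mulVec_neg, Matrix.mulVec_mulVec, hPP]
    calc (W *ᵥ sbar + zstar) ⬝ᵥ (P *ᵥ p)
        = (P *ᵥ (W *ᵥ sbar + zstar)) ⬝ᵥ p := by
          rw [Matrix.dotProduct_mulVec, ← Matrix.mulVec_transpose, hP.eq]
      _ = 0 := by rw [hz, zero_dotProduct]
  · rintro ⟨⟨p, hp⟩, horth⟩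
    have hfix : P *ᵥ sbar = sbar := by
      rw [hp, Matrix.mulVec_mulVec, hPP]
    have hz : P *ᵥ (W *ᵥ sbar + zstar) = 0 := by
      funext i
      have := horth (Pi.single i 1)
      rw [Matrix.dotProduct_mulVec, ← Matrix.mulVec_transpose, hP.eq] at this
      simpa [dotProduct_single] using this
    have hPWs : P *ᵥ (W *ᵥ sbar) = -(P *ᵥ zstar) := by
      have := hz
      rw [Matrix.mulVec_add] at this
      exact eq_neg_of_add_eq_zero_left this
    have hIPWs : (1 - P) *ᵥ (W *ᵥ sbar) = 0 := by
      rw [Matrix.mulVec_mulVec, hIPW, Matrix.sub_mulVec, Matrix.one_mulVec, hfix, sub_self]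
    have : W *ᵥ sbar = P *ᵥ (W *ᵥ sbar) + (1 - P) *ᵥ (W *ᵥ sbar) := by
      rw [Matrix.sub_mulVec, Matrix.one_mulVec]
      abel
    rw [this, hPWs, hIPWs, add_zero]
end

section
/- Let (P, W) be a PW-pair of real n×n matrices such that the matrix PWP is positive semidefinite, let z* ∈ ℝⁿ, and let s̄ ∈ ℝⁿ satisfy W s̄ = −P z*. Then s̄ is a global minimizer of the quadratic program: for every s in the range of P one has ½⟨s̄, W s̄⟩ + ⟨z*, s̄⟩ ≤ ½⟨s, W s⟩ + ⟨z*, s⟩. -/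
open Matrix

/-- **Global optimality of stationary points under semidefiniteness.**
If `(P,W)` is a PW-pair with `PWP` positive semidefinite and `W s̄ = −P z*`, then `s̄`
globally minimizes `s ↦ ½⟨s, Ws⟩ + ⟨z*, s⟩` over the range of `P`. -/
theorem stmt_8 (n : ℕ) (hn : 1 ≤ n)
    (P W : Matrix (Fin n) (Fin n) ℝ) (hPW : IsPWPair P W)
    (hpsd : ∀ z : Fin n → ℝ, 0 ≤ z ⬝ᵥ ((P * W * P) *ᵥ z))
    (zstar sbar : Fin n → ℝ)
    (hs : W *ᵥ sbar = -(P *ᵥ zstar)) :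
    ∀ s : Fin n → ℝ, (∃ p : Fin n → ℝ, s = P *ᵥ p) →
      (1 / 2) * (sbar ⬝ᵥ (W *ᵥ sbar)) + zstar ⬝ᵥ sbar ≤
        (1 / 2) * (s ⬝ᵥ (W *ᵥ s)) + zstar ⬝ᵥ s := by
  obtain ⟨hPsym, hWsym, hP2, hW1P⟩ := hPW
  -- symmetry swap lemmas
  have swapW : ∀ u v : Fin n → ℝ, u ⬝ᵥ (W *ᵥ v) = v ⬝ᵥ (W *ᵥ u) := by
    intro u v
    rw [dotProduct_mulVec, ← mulVec_transpose, hWsym.eq, dotProduct_comm]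
  have swapP : ∀ u v : Fin n → ℝ, u ⬝ᵥ (P *ᵥ v) = v ⬝ᵥ (P *ᵥ u) := by
    intro u v
    rw [dotProduct_mulVec, ← mulVec_transpose, hPsym.eq, dotProduct_comm]
  -- (1-P)*W = 1-P
  have h1PW : (1 - P) * W = 1 - P := by
    have := congrArg Matrix.transpose hW1P
    simpa [Matrix.transpose_mul, Matrix.transpose_sub, hPsym.eq, hWsym.eq] using this
  -- sbar is in the range of P
  have hsbar : P *ᵥ sbar = sbar := by
    have h0 : (1 - P) *ᵥ sbar = 0 := by
      calc (1 - P) *ᵥ sbar = ((1 - P) * W) *ᵥ sbar := by rw [h1PW]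
        _ = (1 - P) *ᵥ (W *ᵥ sbar) := by rw [← mulVec_mulVec]
        _ = -(((1 - P) * P) *ᵥ zstar) := by rw [hs, mulVec_neg, mulVec_mulVec]
        _ = 0 := by
            have : (1 - P) * P = 0 := by rw [sub_mul, one_mul, hP2, sub_self]
            simp [this]
    have := h0
    rw [sub_mulVec, one_mulVec, sub_eq_zero] at this
    exact this.symm
  rintro s ⟨p, rfl⟩
  set q : Fin n → ℝ := p - sbar with hq
  have hsq : P *ᵥ p = sbar + P *ᵥ q := by
    rw [hq, mulVec_sub, hsbar]; abel
  rw [hsq]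
  set d : Fin n → ℝ := P *ᵥ q with hd
  -- cross term vanishes
  have hcross : d ⬝ᵥ (W *ᵥ sbar) + zstar ⬝ᵥ d = 0 := by
    have h1 : d ⬝ᵥ (W *ᵥ sbar) = -(q ⬝ᵥ (P *ᵥ zstar)) := by
      rw [hs, dotProduct_neg, hd, swapP, mulVec_mulVec, hP2, swapP]
    have h2 : zstar ⬝ᵥ d = q ⬝ᵥ (P *ᵥ zstar) := by
      rw [hd, swapP]
    rw [h1, h2]; ring
  -- quadratic term is nonnegative
  have hquad : 0 ≤ d ⬝ᵥ (W *ᵥ d) := by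
    have : d ⬝ᵥ (W *ᵥ d) = q ⬝ᵥ ((P * W * P) *ᵥ q) := by
      calc (P *ᵥ q) ⬝ᵥ (W *ᵥ (P *ᵥ q)) = (P *ᵥ q) ⬝ᵥ ((W * P) *ᵥ q) := by
            rw [mulVec_mulVec]
        _ = ((W * P) *ᵥ q) ⬝ᵥ (P *ᵥ q) := dotProduct_comm _ _
        _ = q ⬝ᵥ (P *ᵥ ((W * P) *ᵥ q)) := swapP _ _
        _ = q ⬝ᵥ ((P * W * P) *ᵥ q) := by rw [mulVec_mulVec, ← Matrix.mul_assoc]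
    rw [this]; exact hpsd q
  have hexp : (sbar + d) ⬝ᵥ (W *ᵥ (sbar + d)) =
      sbar ⬝ᵥ (W *ᵥ sbar) + 2 * (d ⬝ᵥ (W *ᵥ sbar)) + d ⬝ᵥ (W *ᵥ d) := by
    rw [mulVec_add]
    simp only [dotProduct_add, add_dotProduct, swapW sbar d]
    ring
  rw [hexp, dotProduct_add]
  linarith
end

section
/- Let (P, W) be a PW-pair of real n×n matrices with W positive definite and P ≠ 0. Then W is invertible and the spectral (ℓ²-operator) norm of P W⁻¹ satisfies ‖P W⁻¹‖ = 1 / min{ ⟨s, W s⟩ : s ∈ range P, ‖s‖ = 1 }, where the minimum is over all unit vectors in the range of P (equivalently, ‖P W⁻¹‖ = 1 / min{ ⟨s, PWP s⟩ : ‖P s‖ = 1 }). -/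
open Matrix

section Aux

variable {n : ℕ}

lemma dp_symm (W : Matrix (Fin n) (Fin n) ℝ) (hW : W.IsSymm) (x y : Fin n → ℝ) :
    x ⬝ᵥ (W *ᵥ y) = y ⬝ᵥ (W *ᵥ x) := by
  rw [dotProduct_mulVec, dotProduct_comm, ← mulVec_transpose, hW.eq]

lemma dp_self_nonneg (v : Fin n → ℝ) : 0 ≤ v ⬝ᵥ v :=
  Finset.sum_nonneg fun i _ => mul_self_nonneg (v i)

lemma norm_symm_eq (v : Fin n → ℝ) :
    ‖(WithLp.equiv 2 (Fin n → ℝ)).symm v‖ = Real.sqrt (v ⬝ᵥ v) := by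
  rw [EuclideanSpace.norm_eq]
  congr 1
  simp [dotProduct, sq]

lemma dp_cs (v w : Fin n → ℝ) :
    v ⬝ᵥ w ≤ Real.sqrt (v ⬝ᵥ v) * Real.sqrt (w ⬝ᵥ w) := by
  have h := real_inner_le_norm
    ((WithLp.equiv 2 (Fin n → ℝ)).symm v) ((WithLp.equiv 2 (Fin n → ℝ)).symm w)
  rw [norm_symm_eq, norm_symm_eq] at h
  refine le_trans (le_of_eq ?_) h
  simp [PiLp.inner_apply, dotProduct, RCLike.inner_apply,
    PiLp.toLp_apply, mul_comm]

lemma coeff_zero_of_quad_nonneg {b c : ℝ} (hb : 0 ≤ b)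
    (h : ∀ t : ℝ, 0 ≤ t ^ 2 * b + 2 * t * c) : c = 0 := by
  by_contra hc
  have ht := h (-c / (b + 1))
  have hb1 : (0:ℝ) < b + 1 := by linarith
  have hc2 : 0 < c ^ 2 := pow_pos (abs_pos.mpr hc) 2 |>.trans_le (by rw [sq_abs])
  have : (-c / (b + 1)) ^ 2 * b + 2 * (-c / (b + 1)) * c
      = (c ^ 2 / (b + 1) ^ 2) * (b - 2 * (b + 1)) := by
    field_simp
    ring
  rw [this] at ht
  nlinarith [div_pos hc2 (pow_pos hb1 2)]

end Aux

/-- **Norm formula for `C_L = P W⁻¹`.** If `(P,W)` is a PW-pair with `W` positive definite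
and `P ≠ 0`, then `W` is invertible and the spectral norm of `P W⁻¹` equals
`1 / min{⟨s, Ws⟩ : s ∈ range P, ‖s‖ = 1}`. -/
theorem stmt_9 (n : ℕ) (hn : 1 ≤ n)
    (P W : Matrix (Fin n) (Fin n) ℝ) (hPW : IsPWPair P W) (hP : P ≠ 0)
    (hpd : ∀ z : Fin n → ℝ, z ≠ 0 → 0 < z ⬝ᵥ (W *ᵥ z)) :
    IsUnit W ∧
      ‖Matrix.toEuclideanCLM (𝕜 := ℝ) (P * W⁻¹)‖ =
        1 / sInf {r : ℝ | ∃ s : Fin n → ℝ,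
            (∃ p : Fin n → ℝ, s = P *ᵥ p) ∧ Real.sqrt (s ⬝ᵥ s) = 1 ∧
            r = s ⬝ᵥ (W *ᵥ s)} := by
  obtain ⟨hPs, hWs, hPP, hW1P⟩ := hPW
  -- W is positive definite
  have hWherm : W.IsHermitian := by
    rwa [Matrix.IsHermitian, conjTranspose_eq_transpose_of_trivial]
  have hpdW : W.PosDef := PosDef.of_dotProduct_mulVec_pos hWherm fun x hx => by simpa using hpd x hx
  have hWu : IsUnit W := hpdW.isUnit
  refine ⟨hWu, ?_⟩
  have hWdet : IsUnit W.det := (Matrix.isUnit_iff_isUnit_det W).mp hWu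
  have hWinvW : W⁻¹ * W = 1 := Matrix.nonsing_inv_mul W hWdet
  have hWWinv : W * W⁻¹ = 1 := Matrix.mul_nonsing_inv W hWdet
  -- matrix identities
  set A := P * W⁻¹ with hA
  have hWinv1P : W⁻¹ * (1 - P) = 1 - P := by
    calc W⁻¹ * (1 - P) = W⁻¹ * (W * (1 - P)) := by rw [hW1P]
    _ = 1 - P := by rw [← mul_assoc, hWinvW, one_mul]
  have hAP : A * P = A := by
    have h0 : A * (1 - P) = 0 := by
      calc A * (1 - P) = P * (W⁻¹ * (1 - P)) := by rw [hA, mul_assoc]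
      _ = P * (1 - P) := by rw [hWinv1P]
      _ = 0 := by rw [mul_sub, mul_one, hPP, sub_self]
    have := h0
    rw [mul_sub, mul_one, sub_eq_zero] at this
    exact this.symm
  have hAW : A * W = P := by rw [hA, mul_assoc, hWinvW, mul_one]
  have hWinvS : W⁻¹.IsSymm := by
    rw [Matrix.IsSymm, Matrix.transpose_nonsing_inv, hWs.eq]
  have hAsymm : A.IsSymm := by
    have h1 : A = P * W⁻¹ * P := by rw [← hAP, hA]
    rw [Matrix.IsSymm, h1, Matrix.transpose_mul, Matrix.transpose_mul,
      hWinvS.eq, hPs.eq, ← mul_assoc]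
  have hWA : W * A = P := by
    have h := congrArg Matrix.transpose hAW
    rwa [Matrix.transpose_mul, hWs.eq, hAsymm.eq, hPs.eq] at h
  have hPWcomm : W * P = P * W := by
    have h1P : (1 - P) * W = 1 - P := by
      have h := congrArg Matrix.transpose hW1P
      simpa [Matrix.transpose_mul, Matrix.transpose_sub, Matrix.transpose_one,
        hPs.eq, hWs.eq] using h
    have e1 : W - W * P = 1 - P := by rw [← hW1P]; rw [mul_sub, mul_one]
    have e2 : W - P * W = 1 - P := by rw [← h1P]; rw [sub_mul, one_mul]
    have h3 : W - W * P = W - P * W := e1.trans e2.symm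
    exact sub_right_injective h3
  -- the range of P as a set
  set V : Set (Fin n → ℝ) := {s | ∃ p : Fin n → ℝ, s = P *ᵥ p} with hV
  set f : (Fin n → ℝ) → ℝ := fun s => s ⬝ᵥ (W *ᵥ s) with hf
  set K : Set (Fin n → ℝ) := {s | s ∈ V ∧ s ⬝ᵥ s = 1} with hK
  -- K is nonempty
  have hKne : K.Nonempty := by
    have hex : ∃ x : Fin n → ℝ, P *ᵥ x ≠ 0 := by
      by_contra h
      push_neg at h
      apply hP
      ext i j
      have := congrFun (h (Pi.single j 1)) i
      simpa [Matrix.mulVec_single] using this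
    obtain ⟨x₀, hx₀⟩ := hex
    set y₀ := P *ᵥ x₀ with hy₀
    have hy₀pos : 0 < y₀ ⬝ᵥ y₀ :=
      lt_of_le_of_ne (dp_self_nonneg y₀) (fun h => hx₀ (dotProduct_self_eq_zero.mp h.symm))
    set c := Real.sqrt (y₀ ⬝ᵥ y₀) with hc
    have hcpos : 0 < c := Real.sqrt_pos.mpr hy₀pos
    refine ⟨c⁻¹ • y₀, ⟨c⁻¹ • x₀, by rw [Matrix.mulVec_smul]⟩, ?_⟩
    have : (c⁻¹ • y₀) ⬝ᵥ (c⁻¹ • y₀) = c⁻¹ * (c⁻¹ * (y₀ ⬝ᵥ y₀)) := by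
      rw [smul_dotProduct, dotProduct_smul]; rfl
    rw [this, hc]
    rw [← Real.sqrt_mul_self (le_of_lt hy₀pos)]
    field_simp
    rw [Real.sq_sqrt (Real.sqrt_nonneg _)]
  -- K is compact
  have hKcompact : IsCompact K := by
    have hVclosed : IsClosed V := by
      have : V = (LinearMap.range (Matrix.mulVecLin P) : Set (Fin n → ℝ)) := by
        ext s
        simp [hV, LinearMap.mem_range, Matrix.mulVecLin_apply, eq_comm]
      rw [this]
      exact Submodule.closed_of_finiteDimensional _
    have hfc : Continuous fun s : Fin n → ℝ => s ⬝ᵥ s := by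
      unfold dotProduct
      exact continuous_finset_sum _ fun i _ => (continuous_apply i).mul (continuous_apply i)
    have hclosed : IsClosed K := by
      apply IsClosed.inter hVclosed
      exact isClosed_eq hfc continuous_const
    have hbdd : Bornology.IsBounded K := by
      apply Bornology.IsBounded.subset (Metric.isBounded_closedBall (x := 0) (r := 1))
      rintro s ⟨_, hs1⟩
      rw [Metric.mem_closedBall, dist_zero_right]
      rw [pi_norm_le_iff_of_nonneg zero_le_one]
      intro i
      rw [Real.norm_eq_abs, abs_le_one_iff_mul_self_le_one]
      calc s i * s i ≤ s ⬝ᵥ s := Finset.single_le_sum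
            (f := fun j => s j * s j) (fun j _ => mul_self_nonneg (s j)) (Finset.mem_univ i)
      _ = 1 := hs1
    exact Metric.isCompact_of_isClosed_isBounded hclosed hbdd
  have hfcont : Continuous f := by
    unfold f
    unfold dotProduct mulVec
    apply continuous_finset_sum _ fun i _ => (continuous_apply i).mul ?_
    unfold dotProduct
    exact continuous_finset_sum _ fun j _ => (continuous_const).mul (continuous_apply j)
  obtain ⟨s₀, hs₀K, hmin⟩ := hKcompact.exists_isMinOn hKne hfcont.continuousOn
  obtain ⟨hs₀V, hs₀1⟩ := hs₀K
  set m := f s₀ with hm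
  have hs₀ne : s₀ ≠ 0 := fun h => by simp [h] at hs₀1
  have hmpos : 0 < m := hpd s₀ hs₀ne
  -- identify the sInf
  have hSinf : sInf {r : ℝ | ∃ s : Fin n → ℝ,
      (∃ p : Fin n → ℝ, s = P *ᵥ p) ∧ Real.sqrt (s ⬝ᵥ s) = 1 ∧
      r = s ⬝ᵥ (W *ᵥ s)} = m := by
    have hSeq : {r : ℝ | ∃ s : Fin n → ℝ,
        (∃ p : Fin n → ℝ, s = P *ᵥ p) ∧ Real.sqrt (s ⬝ᵥ s) = 1 ∧
        r = s ⬝ᵥ (W *ᵥ s)} = f '' K := by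
      ext r
      constructor
      · rintro ⟨s, hsV, hs1, rfl⟩
        refine ⟨s, ⟨hsV, ?_⟩, rfl⟩
        have := Real.sqrt_eq_one.mp hs1
        exact this
      · rintro ⟨s, ⟨hsV, hs1⟩, rfl⟩
        exact ⟨s, hsV, by rw [hs1]; exact Real.sqrt_one, rfl⟩
    rw [hSeq]
    apply le_antisymm
    · exact csInf_le ⟨m, by rintro r ⟨s, hs, rfl⟩; exact hmin hs⟩ ⟨s₀, ⟨hs₀V, hs₀1⟩, rfl⟩
    · exact le_csInf ⟨m, ⟨s₀, ⟨hs₀V, hs₀1⟩, rfl⟩⟩ (by rintro r ⟨s, hs, rfl⟩; exact hmin hs)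
  rw [hSinf]
  -- quadratic form lower bound on V
  have hq : ∀ s ∈ V, m * (s ⬝ᵥ s) ≤ s ⬝ᵥ (W *ᵥ s) := by
    intro s hsV
    rcases eq_or_ne s 0 with rfl | hs0
    · simp
    · have hspos : 0 < s ⬝ᵥ s :=
        lt_of_le_of_ne (dp_self_nonneg s) (fun h => hs0 (dotProduct_self_eq_zero.mp h.symm))
      set c := Real.sqrt (s ⬝ᵥ s) with hc
      have hcpos : 0 < c := Real.sqrt_pos.mpr hspos
      have hc2 : c * c = s ⬝ᵥ s := Real.mul_self_sqrt (le_of_lt hspos)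
      have hmem : c⁻¹ • s ∈ K := by
        obtain ⟨p, rfl⟩ := hsV
        refine ⟨⟨c⁻¹ • p, by rw [Matrix.mulVec_smul]⟩, ?_⟩
        rw [smul_dotProduct, dotProduct_smul, smul_eq_mul, smul_eq_mul, ← mul_assoc, ← hc2]
        field_simp
      have hmle : m ≤ f (c⁻¹ • s) := hmin hmem
      have hfval : f (c⁻¹ • s) = c⁻¹ * (c⁻¹ * (s ⬝ᵥ (W *ᵥ s))) := by
        show (c⁻¹ • s) ⬝ᵥ (W *ᵥ (c⁻¹ • s)) = _
        rw [Matrix.mulVec_smul, smul_dotProduct, dotProduct_smul, smul_eq_mul, smul_eq_mul]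
      rw [hfval] at hmle
      have hkey : m * (c * c) ≤ s ⬝ᵥ (W *ᵥ s) := by
        have h3 := mul_le_mul_of_nonneg_left hmle (le_of_lt (mul_pos hcpos hcpos))
        calc m * (c * c) = c * c * m := by ring
        _ ≤ c * c * (c⁻¹ * (c⁻¹ * (s ⬝ᵥ (W *ᵥ s)))) := h3
        _ = s ⬝ᵥ (W *ᵥ s) := by field_simp
      rwa [hc2] at hkey
  -- s₀ is an eigenvector : W *ᵥ s₀ = m • s₀
  have heig : W *ᵥ s₀ = m • s₀ := by
    set u := W *ᵥ s₀ - m • s₀ with hu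
    obtain ⟨p₀, hp₀⟩ := hs₀V
    have huV : u ∈ V := by
      refine ⟨W *ᵥ p₀ - m • p₀, ?_⟩
      have hws : W *ᵥ s₀ = P *ᵥ (W *ᵥ p₀) := by
        rw [hp₀, Matrix.mulVec_mulVec, hPWcomm, ← Matrix.mulVec_mulVec]
      rw [hu, hws, hp₀, Matrix.mulVec_sub, Matrix.mulVec_smul]
    have hortho : ∀ v ∈ V, v ⬝ᵥ u = 0 := by
      intro v hvV
      set b := v ⬝ᵥ (W *ᵥ v) - m * (v ⬝ᵥ v) with hb
      have hbnn : 0 ≤ b := by have := hq v hvV; rw [hb]; linarith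
      apply coeff_zero_of_quad_nonneg hbnn
      intro t
      have hmemV : s₀ + t • v ∈ V := by
        obtain ⟨p, rfl⟩ := hvV
        exact ⟨p₀ + t • p, by rw [Matrix.mulVec_add, Matrix.mulVec_smul, hp₀]⟩
      have h := hq _ hmemV
      have hWsym := dp_symm W hWs
      have hexp1 : (s₀ + t • v) ⬝ᵥ (W *ᵥ (s₀ + t • v))
          = s₀ ⬝ᵥ (W *ᵥ s₀) + 2 * t * (v ⬝ᵥ (W *ᵥ s₀)) + t ^ 2 * (v ⬝ᵥ (W *ᵥ v)) := by
        rw [Matrix.mulVec_add, Matrix.mulVec_smul, add_dotProduct, dotProduct_add,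
          dotProduct_add, smul_dotProduct, dotProduct_smul, dotProduct_smul,
          smul_dotProduct]
        have := hWsym s₀ v
        simp only [smul_eq_mul]
        rw [this]
        ring
      have hexp2 : (s₀ + t • v) ⬝ᵥ (s₀ + t • v)
          = s₀ ⬝ᵥ s₀ + 2 * t * (v ⬝ᵥ s₀) + t ^ 2 * (v ⬝ᵥ v) := by
        rw [add_dotProduct, dotProduct_add, dotProduct_add, smul_dotProduct,
          dotProduct_smul, dotProduct_smul, smul_dotProduct]
        simp only [smul_eq_mul]
        rw [dotProduct_comm s₀ v]
        ring
      have hfs₀ : s₀ ⬝ᵥ (W *ᵥ s₀) = m := rfl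
      have hvu : v ⬝ᵥ u = v ⬝ᵥ (W *ᵥ s₀) - m * (v ⬝ᵥ s₀) := by
        rw [hu, dotProduct_sub, dotProduct_smul, smul_eq_mul]
      rw [hexp1, hexp2, hfs₀, hs₀1] at h
      rw [hvu, hb]
      nlinarith [h]
    have := hortho u huV
    have huz : u = 0 := dotProduct_self_eq_zero.mp this
    rw [hu, sub_eq_zero] at huz
    exact huz
  -- A *ᵥ s₀ = m⁻¹ • s₀
  have hPs₀ : P *ᵥ s₀ = s₀ := by
    obtain ⟨p₀, rfl⟩ := hs₀V
    rw [Matrix.mulVec_mulVec, hPP]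
  have hAs₀ : A *ᵥ s₀ = m⁻¹ • s₀ := by
    have h1 : A *ᵥ (W *ᵥ s₀) = s₀ := by
      rw [Matrix.mulVec_mulVec, hAW, hPs₀]
    rw [heig, Matrix.mulVec_smul] at h1
    have := congrArg (fun z => m⁻¹ • z) h1
    simpa [smul_smul, inv_mul_cancel₀ (ne_of_gt hmpos)] using this
  -- now the norm computation
  set T := Matrix.toEuclideanCLM (𝕜 := ℝ) A with hT
  have hTapply : ∀ v : Fin n → ℝ,
      T ((WithLp.equiv 2 (Fin n → ℝ)).symm v) = (WithLp.equiv 2 (Fin n → ℝ)).symm (A *ᵥ v) := by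
    intro v
    rw [hT]; exact Matrix.toEuclideanCLM_toLp A v
  apply le_antisymm
  · -- upper bound
    apply ContinuousLinearMap.opNorm_le_bound _ (by positivity)
    intro x
    set x' := WithLp.equiv 2 (Fin n → ℝ) x with hx'
    have hxeq : x = (WithLp.equiv 2 (Fin n → ℝ)).symm x' := rfl
    set z := A *ᵥ x' with hz
    set y := P *ᵥ x' with hy
    have hTx : T x = (WithLp.equiv 2 (Fin n → ℝ)).symm z := by
      rw [hxeq, hTapply]
    rw [hTx, hxeq, norm_symm_eq, norm_symm_eq]
    -- z ∈ V
    have hzV : z ∈ V := ⟨W⁻¹ *ᵥ x', by rw [hz, hA, ← Matrix.mulVec_mulVec]⟩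
    -- W *ᵥ z = y
    have hWz : W *ᵥ z = y := by
      rw [hz, hy, Matrix.mulVec_mulVec, hWA]
    -- m * (z⬝z) ≤ z⬝y
    have h1 : m * (z ⬝ᵥ z) ≤ z ⬝ᵥ y := by
      have := hq z hzV
      rwa [hWz] at this
    -- sqrt(y⬝y) ≤ sqrt(x'⬝x') : contraction
    have hsyx : Real.sqrt (y ⬝ᵥ y) ≤ Real.sqrt (x' ⬝ᵥ x') := by
      rcases eq_or_lt_of_le (Real.sqrt_nonneg (y ⬝ᵥ y)) with h0 | h0
      · rw [← h0]; exact Real.sqrt_nonneg _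
      · have hyy : y ⬝ᵥ y = y ⬝ᵥ x' := by
          rw [hy, dp_symm P hPs (P *ᵥ x') x', Matrix.mulVec_mulVec, hPP,
            dp_symm P hPs x' x']
          exact dotProduct_comm _ _
        have hcs := dp_cs y x'
        have ey : Real.sqrt (y ⬝ᵥ y) * Real.sqrt (y ⬝ᵥ y) = y ⬝ᵥ y :=
          Real.mul_self_sqrt (dp_self_nonneg y)
        nlinarith [hcs, ey, h0]
    have hcs2 := dp_cs z y
    have hsz := Real.sqrt_nonneg (z ⬝ᵥ z)
    rcases eq_or_lt_of_le hsz with h0 | h0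
    · rw [← h0]; positivity
    · have ez : Real.sqrt (z ⬝ᵥ z) * Real.sqrt (z ⬝ᵥ z) = z ⬝ᵥ z :=
        Real.mul_self_sqrt (dp_self_nonneg z)
      have hchain : m * (Real.sqrt (z ⬝ᵥ z) * Real.sqrt (z ⬝ᵥ z))
          ≤ Real.sqrt (z ⬝ᵥ z) * Real.sqrt (x' ⬝ᵥ x') := by
        calc m * (Real.sqrt (z ⬝ᵥ z) * Real.sqrt (z ⬝ᵥ z)) = m * (z ⬝ᵥ z) := by rw [ez]
        _ ≤ z ⬝ᵥ y := h1
        _ ≤ Real.sqrt (z ⬝ᵥ z) * Real.sqrt (y ⬝ᵥ y) := hcs2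
        _ ≤ Real.sqrt (z ⬝ᵥ z) * Real.sqrt (x' ⬝ᵥ x') :=
            mul_le_mul_of_nonneg_left hsyx hsz
      have hfin : m * Real.sqrt (z ⬝ᵥ z) ≤ Real.sqrt (x' ⬝ᵥ x') := by
        nlinarith [hchain, h0]
      rw [one_div]
      calc Real.sqrt (z ⬝ᵥ z) = m⁻¹ * (m * Real.sqrt (z ⬝ᵥ z)) := by
            field_simp
      _ ≤ m⁻¹ * Real.sqrt (x' ⬝ᵥ x') :=
            mul_le_mul_of_nonneg_left hfin (le_of_lt (inv_pos.mpr hmpos))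
  · -- lower bound
    set x₀ := (WithLp.equiv 2 (Fin n → ℝ)).symm s₀ with hx₀
    have hnx₀ : ‖x₀‖ = 1 := by rw [hx₀, norm_symm_eq, hs₀1, Real.sqrt_one]
    have hTx₀ : ‖T x₀‖ = m⁻¹ := by
      rw [hx₀, hTapply, hAs₀, norm_symm_eq]
      rw [smul_dotProduct, dotProduct_smul, smul_eq_mul, smul_eq_mul, hs₀1]
      rw [mul_one, Real.sqrt_mul_self (le_of_lt (inv_pos.mpr hmpos))]
    have hle := T.le_opNorm x₀
    rw [hTx₀, hnx₀, mul_one] at hle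
    rw [one_div]
    exact hle
end

section
/- Let (P, W) be a PW-pair of real n×n matrices. Then W is positive definite if and only if W is invertible and the matrix PWP is positive semidefinite. -/
open Matrix

/-- **Positive definiteness of `W` for a PW-pair.** `W` is positive definite iff `W` is
invertible and `PWP` is positive semidefinite. -/
theorem stmt_10 (n : ℕ) (hn : 1 ≤ n)
    (P W : Matrix (Fin n) (Fin n) ℝ) (hPW : IsPWPair P W) :
    (∀ z : Fin n → ℝ, z ≠ 0 → 0 < z ⬝ᵥ (W *ᵥ z)) ↔
      (IsUnit W ∧ ∀ z : Fin n → ℝ, 0 ≤ z ⬝ᵥ ((P * W * P) *ᵥ z)) := by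
  obtain ⟨hP, hW, hPP, hWIP⟩ := hPW
  have hPherm : P.IsHermitian := by
    simpa [Matrix.IsHermitian, Matrix.conjTranspose_eq_transpose_of_trivial] using hP.eq
  have hWherm : W.IsHermitian := by
    simpa [Matrix.IsHermitian, Matrix.conjTranspose_eq_transpose_of_trivial] using hW.eq
  -- key identity : P * W * P = W - (1 - P)
  have h1 : W * P = W - 1 + P := by
    have := hWIP
    rw [mul_sub, mul_one] at this
    linear_combination (norm := noncomm_ring) -this
  have h2 : P * W = W - 1 + P := by
    have := congrArg Matrix.transpose h1
    simpa [Matrix.transpose_mul, hP.eq, hW.eq] using this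
  have key : P * W * P = W - (1 - P) := by
    rw [h2, add_mul, sub_mul, one_mul, hPP, h1]
    abel
  -- ⟨z, (1-P) z⟩ is a square
  have hsq : ∀ z : Fin n → ℝ, z ⬝ᵥ ((1 - P) *ᵥ z) = ((1 - P) *ᵥ z) ⬝ᵥ ((1 - P) *ᵥ z) := by
    intro z
    have hQ : (1 - P) * (1 - P) = 1 - P := by
      linear_combination (norm := noncomm_ring) hPP
    conv_lhs => rw [← hQ]
    rw [← Matrix.mulVec_mulVec, Matrix.dotProduct_mulVec, ← Matrix.mulVec_transpose]
    congr 1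
    rw [Matrix.transpose_sub, Matrix.transpose_one, hP.eq]
  constructor
  · intro h
    have hPD : W.PosDef := by
      refine Matrix.posDef_iff_dotProduct_mulVec.mpr ⟨hWherm, fun x hx => ?_⟩
      simpa using h x hx
    refine ⟨hPD.isUnit, fun z => ?_⟩
    have : (P * W * P) *ᵥ z = P *ᵥ (W *ᵥ (P *ᵥ z)) := by
      simp [← Matrix.mulVec_mulVec]
    rw [this]
    have hz : z ⬝ᵥ (P *ᵥ (W *ᵥ (P *ᵥ z))) = (P *ᵥ z) ⬝ᵥ (W *ᵥ (P *ᵥ z)) := by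
      rw [Matrix.dotProduct_mulVec, ← Matrix.mulVec_transpose, hP.eq]
    rw [hz]
    rcases eq_or_ne (P *ᵥ z) 0 with h0 | h0
    · simp [h0]
    · exact (h _ h0).le
  · rintro ⟨hU, hpsd⟩ z hz
    have hdec : ∀ y : Fin n → ℝ, y ⬝ᵥ (W *ᵥ y)
        = y ⬝ᵥ ((P * W * P) *ᵥ y) + ((1 - P) *ᵥ y) ⬝ᵥ ((1 - P) *ᵥ y) := by
      intro y
      rw [← hsq, key]
      simp [Matrix.sub_mulVec, dotProduct_sub]
    have hPSD : W.PosSemidef := by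
      refine Matrix.posSemidef_iff_dotProduct_mulVec.mpr ⟨hWherm, fun x => ?_⟩
      have : (0:ℝ) ≤ x ⬝ᵥ (W *ᵥ x) := by
        rw [hdec x]
        have h2' : (0:ℝ) ≤ ((1 - P) *ᵥ x) ⬝ᵥ ((1 - P) *ᵥ x) := by
          simp only [dotProduct]
          exact Finset.sum_nonneg fun i _ => mul_self_nonneg _
        exact add_nonneg (hpsd x) h2'
      simpa using this
    have h0 : (0:ℝ) ≤ z ⬝ᵥ (W *ᵥ z) := by
      have := (Matrix.posSemidef_iff_dotProduct_mulVec.mp hPSD).2 z; simpa using this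
    rcases h0.lt_or_eq with h | h
    · exact h
    · exfalso
      have hWz : W *ᵥ z = 0 := by
        have := (hPSD.dotProduct_mulVec_zero_iff z).mp (by simpa using h.symm)
        simpa using this
      have : z = 0 := by
        have hinj := Matrix.mulVec_injective_iff_isUnit.mpr hU
        have : W *ᵥ z = W *ᵥ 0 := by simp [hWz]
        exact hinj this
      exact hz this
end

section
/- Let (P, W) be a PW-pair of real n×n matrices and let H be a symmetric real n×n matrix. Then {(P p, (H P + W) p) : p ∈ ℝⁿ} = {(P p, (P H P + W) p) : p ∈ ℝⁿ}, the matrix P H P + W is symmetric, and (P H P + W)(I − P) = I − P; in particular (P, P H P + W) is again a PW-pair. (This is the linear-algebraic content of the sum rule for SC derivatives: adding a twice differentiable function f with Hessian H replaces the PW-pair (P, W) of ∂g by (P, P∇²f P + W) for ∂(f+g).) -/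
open Matrix

/-- **Sum rule for PW-pairs.** For a PW-pair `(P,W)` and a symmetric matrix `H`:
`{(Pp, (HP+W)p)} = {(Pp, (PHP+W)p)}`, the matrix `PHP + W` is symmetric,
`(PHP+W)(I−P) = I−P`, and in particular `(P, PHP+W)` is again a PW-pair. -/
theorem stmt_11 (n : ℕ) (hn : 1 ≤ n)
    (P W H : Matrix (Fin n) (Fin n) ℝ) (hPW : IsPWPair P W) (hH : H.IsSymm) :
    ({q : (Fin n → ℝ) × (Fin n → ℝ) | ∃ p : Fin n → ℝ, q = (P *ᵥ p, (H * P + W) *ᵥ p)}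
        = LPW P (P * H * P + W)) ∧
      (P * H * P + W).IsSymm ∧
      (P * H * P + W) * (1 - P) = 1 - P ∧
      IsPWPair P (P * H * P + W) := by
  obtain ⟨hPs, hWs, hP2, hWP⟩ := hPW
  have hPE : P * (1 - P) = 0 := by rw [mul_sub, mul_one, hP2, sub_self]
  have hsym : (P * H * P + W).IsSymm := by
    unfold Matrix.IsSymm at *
    rw [transpose_add, transpose_mul, transpose_mul, hPs, hH, hWs, mul_assoc]
  have hinv : (P * H * P + W) * (1 - P) = 1 - P := by
    rw [add_mul, hWP, mul_assoc, mul_assoc, hPE, mul_zero, mul_zero, zero_add]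
  refine ⟨?_, hsym, hinv, hPs, hsym, hP2, hinv⟩
  have h1 : P * (1 + (1 - P) * H * P) = P := by
    calc P * (1 + (1 - P) * H * P)
        = P + (P * (1 - P)) * (H * P) := by noncomm_ring
      _ = P := by rw [hPE, zero_mul, add_zero]
  have h2 : (P * H * P + W) * (1 + (1 - P) * H * P) = H * P + W := by
    calc (P * H * P + W) * (1 + (1 - P) * H * P)
        = P * H * P + P * H * (P * (1 - P)) * (H * P) + (W + (W * (1 - P)) * (H * P)) := by
          noncomm_ring
      _ = P * H * P + P * H * 0 * (H * P) + (W + (1 - P) * (H * P)) := by rw [hPE, hWP]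
      _ = H * P + W := by noncomm_ring
  have h3 : P * (1 - (1 - P) * H * P) = P := by
    calc P * (1 - (1 - P) * H * P)
        = P - (P * (1 - P)) * (H * P) := by noncomm_ring
      _ = P := by rw [hPE, zero_mul, sub_zero]
  have h4 : (H * P + W) * (1 - (1 - P) * H * P) = P * H * P + W := by
    calc (H * P + W) * (1 - (1 - P) * H * P)
        = H * P - H * (P * (1 - P)) * (H * P) + (W - (W * (1 - P)) * (H * P)) := by
          noncomm_ring
      _ = H * P - H * 0 * (H * P) + (W - (1 - P) * (H * P)) := by rw [hPE, hWP]
      _ = P * H * P + W := by noncomm_ring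
  ext q
  simp only [Set.mem_setOf_eq, LPW]
  constructor
  · rintro ⟨p, rfl⟩
    exact ⟨(1 + (1 - P) * H * P) *ᵥ p, by rw [mulVec_mulVec, mulVec_mulVec, h1, h2]⟩
  · rintro ⟨p, rfl⟩
    exact ⟨(1 - (1 - P) * H * P) *ᵥ p, by rw [mulVec_mulVec, mulVec_mulVec, h3, h4]⟩
end

section
/- Let f : ℝⁿ → ℝ be (Fréchet) differentiable at x̄ with gradient ∇f(x̄), let g : ℝⁿ → ℝ ∪ {+∞} satisfy g(x̄) < +∞, and let λ > 0. If x̄ ∈ T_λ(x̄), i.e. x̄ minimizes z ↦ ⟨∇f(x̄), z − x̄⟩ + ‖z − x̄‖²/(2λ) + g(z) over ℝⁿ, then 0 is a regular (Fréchet) subgradient of φ := f + g at x̄; explicitly, for every ε > 0 there exists δ > 0 such that f(y) + g(y) ≥ f(x̄) + g(x̄) − ε‖y − x̄‖ for all y with ‖y − x̄‖ ≤ δ. -/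
open scoped RealInnerProductSpace

/-- **Fixed points of the forward–backward map are stationary.**
Let `f` be differentiable at `x̄` with gradient `v`, `g` extended-real-valued (never `−∞`)
with `g x̄ < +∞`, and `λ > 0`. If `x̄` minimizes
`z ↦ f(x̄) + ⟪v, z − x̄⟫ + ‖z − x̄‖²/(2λ) + g(z)` (i.e. `x̄ ∈ T_λ(x̄)`), then `0` is a regular
(Fréchet) subgradient of `φ = f + g` at `x̄`: for every `ε > 0` there is `δ > 0` with
`f(y) + g(y) ≥ f(x̄) + g(x̄) − ε ‖y − x̄‖` whenever `‖y − x̄‖ ≤ δ`. -/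
theorem stmt_12 (n : ℕ) (hn : 1 ≤ n)
    (f : EuclideanSpace ℝ (Fin n) → ℝ) (xbar v : EuclideanSpace ℝ (Fin n))
    (hf : HasGradientAt f v xbar)
    (g : EuclideanSpace ℝ (Fin n) → EReal)
    (hgbot : ∀ z, g z ≠ ⊥) (hgx : g xbar ≠ ⊤)
    (lam : ℝ) (hlam : 0 < lam)
    (hmin : ∀ z : EuclideanSpace ℝ (Fin n),
      ((f xbar : ℝ) : EReal) + g xbar ≤
        ((f xbar + ⟪v, z - xbar⟫ + ‖z - xbar‖ ^ 2 / (2 * lam) : ℝ) : EReal) + g z) :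
    ∀ ε : ℝ, 0 < ε → ∃ δ : ℝ, 0 < δ ∧ ∀ y : EuclideanSpace ℝ (Fin n),
      ‖y - xbar‖ ≤ δ →
        ((f xbar - ε * ‖y - xbar‖ : ℝ) : EReal) + g xbar ≤ ((f y : ℝ) : EReal) + g y := by
  intro ε hε
  obtain ⟨c, hc⟩ : ∃ c : ℝ, g xbar = (c : EReal) :=
    ⟨(g xbar).toReal, (EReal.coe_toReal hgx (hgbot xbar)).symm⟩
  -- little-o estimate from differentiability
  have hlo : (fun y => f y - f xbar - ⟪v, y - xbar⟫) =o[nhds xbar] fun y => y - xbar := by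
    have := hf.hasFDerivAt.isLittleO
    simpa [InnerProductSpace.toDual_apply_apply] using this
  have h2 := (Asymptotics.isLittleO_iff.1 hlo) (half_pos hε)
  rw [Metric.eventually_nhds_iff] at h2
  obtain ⟨δ₁, hδ₁, hball⟩ := h2
  refine ⟨min (δ₁ / 2) (ε * lam), lt_min (by linarith) (mul_pos hε hlam), ?_⟩
  intro y hy
  have hr1 : ‖y - xbar‖ < δ₁ := lt_of_le_of_lt (hy.trans (min_le_left _ _)) (by linarith)
  have hr2 : ‖y - xbar‖ ≤ ε * lam := hy.trans (min_le_right _ _)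
  have hest : ‖f y - f xbar - ⟪v, y - xbar⟫‖ ≤ ε / 2 * ‖y - xbar‖ := by
    have := hball (by simpa [dist_eq_norm] using hr1)
    simpa using this
  rcases eq_or_ne (g y) ⊤ with hytop | hytop
  · rw [hytop, EReal.add_top_of_ne_bot (EReal.coe_ne_bot _)]
    exact le_top
  obtain ⟨d, hd⟩ : ∃ d : ℝ, g y = (d : EReal) :=
    ⟨(g y).toReal, (EReal.coe_toReal hytop (hgbot y)).symm⟩
  have hmin' := hmin y
  rw [hc, hd, ← EReal.coe_add, ← EReal.coe_add, EReal.coe_le_coe_iff] at hmin'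
  rw [hc, hd, ← EReal.coe_add, ← EReal.coe_add, EReal.coe_le_coe_iff]
  have habs : |f y - f xbar - ⟪v, y - xbar⟫| ≤ ε / 2 * ‖y - xbar‖ := by
    simpa [Real.norm_eq_abs] using hest
  have hr0 : (0:ℝ) ≤ ‖y - xbar‖ := norm_nonneg _
  have hsq : ‖y - xbar‖ ^ 2 / (2 * lam) ≤ ε / 2 * ‖y - xbar‖ := by
    rw [div_le_iff₀ (by linarith)]
    nlinarith
  have habs' := abs_le.1 habs
  nlinarith [habs'.1, habs'.2]
end

section
/- Let f : ℝⁿ → ℝ be continuously differentiable, let g : ℝⁿ → ℝ ∪ {+∞} be proper, let λ > 0 and α ∈ ℝ. Suppose z ∈ T_λ(x) and f(z) ≤ f(x) + ⟨∇f(x), z − x⟩ + (α/(2λ))‖z − x‖². Then g(z) < +∞ and f(z) + g(z) + ((1−α)/(2λ))‖z − x‖² ≤ φ_λ(x). -/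
open scoped RealInnerProductSpace

/-- The forward–backward envelope `φ_λ(x) := inf_z ψ_λ(x,z)`. -/
noncomputable def phiFB {n : ℕ} (f : EuclideanSpace ℝ (Fin n) → ℝ)
    (g : EuclideanSpace ℝ (Fin n) → EReal) (lam : ℝ)
    (x : EuclideanSpace ℝ (Fin n)) : EReal :=
  ⨅ z, psiFB f g lam x z

/-- **Sufficient decrease of the objective w.r.t. the forward–backward envelope.**
If `z ∈ T_λ(x)` and `f(z) ≤ f(x) + ⟪∇f(x), z−x⟫ + (α/(2λ))‖z−x‖²`, then `g(z) < +∞` and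
`f(z) + g(z) + ((1−α)/(2λ))‖z−x‖² ≤ φ_λ(x)`. -/
theorem stmt_13 (n : ℕ) (hn : 1 ≤ n)
    (f : EuclideanSpace ℝ (Fin n) → ℝ) (hf : ContDiff ℝ 1 f)
    (g : EuclideanSpace ℝ (Fin n) → EReal)
    (hgbot : ∀ z, g z ≠ ⊥) (hgproper : ∃ z, g z ≠ ⊤)
    (lam : ℝ) (hlam : 0 < lam) (α : ℝ)
    (x z : EuclideanSpace ℝ (Fin n))
    (hz : z ∈ TFB f g lam x)
    (hdesc : f z ≤ f x + ⟪gradient f x, z - x⟫ + α / (2 * lam) * ‖z - x‖ ^ 2) :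
    g z < ⊤ ∧
      ((f z : ℝ) : EReal) + g z + (((1 - α) / (2 * lam) * ‖z - x‖ ^ 2 : ℝ) : EReal) ≤
        phiFB f g lam x := by
  obtain ⟨w, hw⟩ := hgproper
  have hzw := hz w
  have htop : g z ≠ ⊤ := by
    intro h
    rw [psiFB, h, EReal.add_top_of_ne_bot (EReal.coe_ne_bot _)] at hzw
    have : psiFB f g lam x w ≠ ⊤ := by
      rw [psiFB]
      exact (EReal.add_lt_top (EReal.coe_ne_top _) hw).ne
    exact this (top_le_iff.mp hzw)
  have hgz : g z = ((g z).toReal : EReal) := (EReal.coe_toReal htop (hgbot z)).symm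
  refine ⟨lt_top_iff_ne_top.mpr htop, ?_⟩
  have hphi : psiFB f g lam x z ≤ phiFB f g lam x := le_iInf hz
  refine le_trans ?_ hphi
  rw [psiFB, hgz]
  norm_cast
  have ht : (1 - α) / (2 * lam) * ‖z - x‖ ^ 2 =
      ‖z - x‖ ^ 2 / (2 * lam) - α / (2 * lam) * ‖z - x‖ ^ 2 := by
    field_simp
  linarith
end

section
/- Let f : ℝⁿ → ℝ be continuously differentiable, let g : ℝⁿ → ℝ ∪ {+∞} be proper and lower semicontinuous, let α, β ∈ (0,1) and λ̄ > 0. Let (x_k), (z_k) be sequences in ℝⁿ and λ_k ∈ (0, λ̄] such that for every k: (a) z_k ∈ T_{λ_k}(x_k); (b) f(z_k) ≤ f(x_k) + ⟨∇f(x_k), z_k − x_k⟩ + (α/(2λ_k))‖z_k − x_k‖²; and (c) φ_{λ_{k+1}}(x_{k+1}) ≤ φ_{λ_k}(x_k) − (β(1−α)/(2λ_k))‖z_k − x_k‖². If inf_k ( f(z_k) + g(z_k) ) > −∞, then: (i) the sequence φ_{λ_k}(x_k) is nonincreasing and converges to a finite limit; (ii) Σ_{k=0}^∞ ‖z_k −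 x_k‖²/(2λ_k) < ∞; (iii) ‖z_k − x_k‖ → 0 as k → ∞. -/
open scoped RealInnerProductSpace

/-- **Global convergence properties of the iterates of BasGSSN.**
Under conditions (a), (b), (c) on the iterates and boundedness below of `f(z_k) + g(z_k)`:
(i) `φ_{λ_k}(x_k)` is nonincreasing and converges to a finite limit;
(ii) `Σ_k ‖z_k − x_k‖²/(2λ_k) < ∞`;
(iii) `‖z_k − x_k‖ → 0`. -/
theorem stmt_14 (n : ℕ) (hn : 1 ≤ n)
    (f : EuclideanSpace ℝ (Fin n) → ℝ) (hf : ContDiff ℝ 1 f)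
    (g : EuclideanSpace ℝ (Fin n) → EReal)
    (hgbot : ∀ w, g w ≠ ⊥) (hgproper : ∃ w, g w ≠ ⊤)
    (hglsc : LowerSemicontinuous g)
    (α β : ℝ) (hα : α ∈ Set.Ioo (0 : ℝ) 1) (hβ : β ∈ Set.Ioo (0 : ℝ) 1)
    (lamBar : ℝ) (hlamBar : 0 < lamBar)
    (x z : ℕ → EuclideanSpace ℝ (Fin n)) (lam : ℕ → ℝ)
    (hlam : ∀ k, lam k ∈ Set.Ioc (0 : ℝ) lamBar)
    (ha : ∀ k, z k ∈ TFB f g (lam k) (x k))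
    (hb : ∀ k, f (z k) ≤ f (x k) + ⟪gradient f (x k), z k - x k⟫ +
      α / (2 * lam k) * ‖z k - x k‖ ^ 2)
    (hc : ∀ k, phiFB f g (lam (k + 1)) (x (k + 1)) ≤
      phiFB f g (lam k) (x k) -
        ((β * (1 - α) / (2 * lam k) * ‖z k - x k‖ ^ 2 : ℝ) : EReal))
    (hbelow : ∃ c : ℝ, ∀ k, ((c : ℝ) : EReal) ≤ ((f (z k) : ℝ) : EReal) + g (z k)) :
    (Antitone (fun k => phiFB f g (lam k) (x k)) ∧
      ∃ φbar : ℝ, Filter.Tendsto (fun k => phiFB f g (lam k) (x k)) Filter.atTop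
        (nhds ((φbar : ℝ) : EReal))) ∧
    Summable (fun k => ‖z k - x k‖ ^ 2 / (2 * lam k)) ∧
    Filter.Tendsto (fun k => ‖z k - x k‖) Filter.atTop (nhds 0) := by
  obtain ⟨c, hcb⟩ := hbelow
  obtain ⟨w0, hw0⟩ := hgproper
  set φ : ℕ → EReal := fun k => phiFB f g (lam k) (x k) with hφdef
  -- D k : the decrease quantity
  set D : ℕ → ℝ := fun k => β * (1 - α) / (2 * lam k) * ‖z k - x k‖ ^ 2 with hDdef
  have hD0 : ∀ k, 0 ≤ D k := by
    intro k
    have hl := (hlam k).1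
    have h1 : 0 ≤ 1 - α := by linarith [hα.2]
    exact mul_nonneg (div_nonneg (mul_nonneg hβ.1.le h1) (by linarith)) (sq_nonneg _)
  -- φ k equals ψ at the minimizer z k
  have hphi_eq : ∀ k, φ k = psiFB f g (lam k) (x k) (z k) := fun k =>
    le_antisymm (iInf_le _ _) (le_iInf (ha k))
  -- lower bound: c ≤ φ k
  have hlow : ∀ k, (c : EReal) ≤ φ k := by
    intro k
    refine (hcb k).trans ?_
    rw [hphi_eq k, psiFB]
    refine add_le_add ?_ le_rfl
    rw [EReal.coe_le_coe_iff]
    have h1 := hb k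
    have hl := (hlam k).1
    have hs : (0:ℝ) ≤ ‖z k - x k‖ ^ 2 := by positivity
    have h2 : α / (2 * lam k) * ‖z k - x k‖ ^ 2 ≤ ‖z k - x k‖ ^ 2 / (2 * lam k) := by
      rw [div_mul_eq_mul_div]
      apply div_le_div_of_nonneg_right _ (by linarith)
      nlinarith [hα.2]
    linarith
  have hbot : ∀ k, φ k ≠ ⊥ := fun k =>
    ne_bot_of_le_ne_bot (EReal.coe_ne_bot c) (hlow k)
  have htop : ∀ k, φ k ≠ ⊤ := by
    intro k
    have h1 : φ k ≤ psiFB f g (lam k) (x k) w0 := iInf_le _ _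
    have h2 : psiFB f g (lam k) (x k) w0 < ⊤ :=
      EReal.add_lt_top (EReal.coe_ne_top _) hw0
    exact (h1.trans_lt h2).ne
  set r : ℕ → ℝ := fun k => (φ k).toReal with hrdef
  have hcoe : ∀ k, φ k = ((r k : ℝ) : EReal) := fun k =>
    (EReal.coe_toReal (htop k) (hbot k)).symm
  -- real version of (c)
  have hrc : ∀ k, r (k + 1) ≤ r k - D k := by
    intro k
    have := hc k
    rw [show phiFB f g (lam (k+1)) (x (k+1)) = φ (k+1) from rfl,
      show phiFB f g (lam k) (x k) = φ k from rfl, hcoe (k+1), hcoe k,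
      ← EReal.coe_sub, EReal.coe_le_coe_iff] at this
    exact this
  have hrlow : ∀ k, c ≤ r k := by
    intro k
    have := hlow k
    rw [hcoe k, EReal.coe_le_coe_iff] at this
    exact this
  have hranti : Antitone r := by
    apply antitone_nat_of_succ_le
    intro k
    have := hrc k
    have := hD0 k
    linarith
  have hφanti : Antitone φ := by
    intro a b hab
    rw [hcoe a, hcoe b, EReal.coe_le_coe_iff]
    exact hranti hab
  have hbdd : BddBelow (Set.range r) := ⟨c, fun y ⟨k, hk⟩ => hk ▸ hrlow k⟩
  have hrt : Filter.Tendsto r Filter.atTop (nhds (⨅ k, r k)) :=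
    tendsto_atTop_ciInf hranti hbdd
  refine ⟨⟨hφanti, ⟨⨅ k, r k, ?_⟩⟩, ?_, ?_⟩
  · have := EReal.tendsto_coe.2 hrt
    convert this using 2 with k
    exact hcoe k
  -- summability
  all_goals {
    have hDsum : Summable D := by
      apply summable_of_sum_range_le hD0 (c := r 0 - c)
      intro N
      have hN : ∀ m : ℕ, ∑ i ∈ Finset.range m, D i ≤ r 0 - r m := by
        intro m
        induction m with
        | zero => simp
        | succ m ih =>
          rw [Finset.sum_range_succ]
          have := hrc m
          linarith
      have := hrlow N
      linarith [hN N]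
    have hsum : Summable (fun k => ‖z k - x k‖ ^ 2 / (2 * lam k)) := by
      have heq : (fun k => ‖z k - x k‖ ^ 2 / (2 * lam k)) =
          fun k => D k / (β * (1 - α)) := by
        funext k
        have hl := (hlam k).1.ne'
        have hβα : β * (1 - α) ≠ 0 := ne_of_gt (mul_pos hβ.1 (by linarith [hα.2]))
        simp only [hDdef]
        rw [eq_div_iff hβα]
        ring
      rw [heq]
      exact hDsum.div_const _
    first
    | exact hsum
    | {
      -- (iii)
      have hst : Filter.Tendsto (fun k => ‖z k - x k‖ ^ 2 / (2 * lam k))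
          Filter.atTop (nhds 0) := hsum.tendsto_atTop_zero
      have hsq : Filter.Tendsto (fun k => ‖z k - x k‖ ^ 2) Filter.atTop (nhds 0) := by
        have hg : Filter.Tendsto (fun k => 2 * lamBar * (‖z k - x k‖ ^ 2 / (2 * lam k)))
            Filter.atTop (nhds 0) := by
          have := hst.const_mul (2 * lamBar)
          simpa using this
        apply squeeze_zero (fun k => by positivity) _ hg
        intro k
        have hl := (hlam k).1
        have hl2 := (hlam k).2
        have hs : (0:ℝ) ≤ ‖z k - x k‖ ^ 2 := by positivity
        rw [mul_div_assoc', le_div_iff₀ (by linarith)]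
        nlinarith
      have := (Real.continuous_sqrt.tendsto 0).comp hsq
      simp only [Function.comp_def] at this
      rw [Real.sqrt_zero] at this
      convert this using 2 with k
      exact (Real.sqrt_sq (norm_nonneg _)).symm
    }
  }
end

section
/- Let W be a symmetric real n×n matrix, let Z be a real n×m matrix with orthonormal columns (ZᵀZ = I_m), set P := Z Zᵀ, and assume W(I − P) = I − P and that W is invertible and positive definite on range P in the sense that the structure W = P W P + (I − P) holds. Then the m×m matrix Zᵀ W Z is invertible and P W⁻¹ = Z (Zᵀ W Z)⁻¹ Zᵀ. -/
open Matrix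

/-- **Basis representation of `C_L = P W⁻¹`.** Let `W` be symmetric, `Z` have orthonormal
columns (`ZᵀZ = I`), `P := ZZᵀ`, and suppose `W(I − P) = I − P`, `W` is invertible, and the
structure identity `W = PWP + (I − P)` holds. Then `ZᵀWZ` is invertible and
`P W⁻¹ = Z (ZᵀWZ)⁻¹ Zᵀ`. -/
theorem stmt_17 (n m : ℕ)
    (W : Matrix (Fin n) (Fin n) ℝ) (Z : Matrix (Fin n) (Fin m) ℝ)
    (hW : W.IsSymm) (hZ : Zᵀ * Z = 1)
    (hWP : W * (1 - Z * Zᵀ) = 1 - Z * Zᵀ)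
    (hWinv : IsUnit W)
    (hstruct : W = (Z * Zᵀ) * W * (Z * Zᵀ) + (1 - Z * Zᵀ)) :
    IsUnit (Zᵀ * W * Z) ∧ (Z * Zᵀ) * W⁻¹ = Z * (Zᵀ * W * Z)⁻¹ * Zᵀ := by
  set P := Z * Zᵀ with hPdef
  have hPsymm : Pᵀ = P := by
    rw [hPdef, Matrix.transpose_mul, Matrix.transpose_transpose]
  have hdet : IsUnit W.det := (Matrix.isUnit_iff_isUnit_det W).mp hWinv
  have hWi1 : W * W⁻¹ = 1 := Matrix.mul_nonsing_inv W hdet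
  have hWi2 : W⁻¹ * W = 1 := Matrix.nonsing_inv_mul W hdet
  -- W * P = P * W
  have hWP' : W - W * P = 1 - P := by rw [← hWP]; rw [mul_sub, mul_one]
  have hPW : P * W = W * P := by
    have ht := congrArg Matrix.transpose hWP'
    simp only [Matrix.transpose_sub, Matrix.transpose_mul, Matrix.transpose_one,
      hPsymm, hW.eq] at ht
    -- ht : W - P * W = 1 - P
    have := ht.trans hWP'.symm
    linear_combination (norm := noncomm_ring) -this
  -- W⁻¹ commutes with P
  have hPWi : P * W⁻¹ = W⁻¹ * P := by
    calc P * W⁻¹ = W⁻¹ * W * P * W⁻¹ := by rw [hWi2, one_mul]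
    _ = W⁻¹ * (P * W) * W⁻¹ := by rw [hPW]; noncomm_ring
    _ = W⁻¹ * P * (W * W⁻¹) := by noncomm_ring
    _ = W⁻¹ * P := by rw [hWi1, mul_one]
  have hP2 : P * P = P := by
    rw [hPdef]
    calc Z * Zᵀ * (Z * Zᵀ) = Z * ((Zᵀ * Z) * Zᵀ) := by simp only [Matrix.mul_assoc]
    _ = Z * Zᵀ := by rw [hZ]; simp
  -- A * B = 1
  have hAB : (Zᵀ * W * Z) * (Zᵀ * W⁻¹ * Z) = 1 := by
    calc (Zᵀ * W * Z) * (Zᵀ * W⁻¹ * Z) = Zᵀ * (W * (P * W⁻¹) * Z) := by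
          rw [hPdef]; simp only [Matrix.mul_assoc]
    _ = Zᵀ * (W * (W⁻¹ * P) * Z) := by rw [hPWi]
    _ = Zᵀ * ((W * W⁻¹) * (P * Z)) := by simp only [Matrix.mul_assoc]
    _ = Zᵀ * (Z * (Zᵀ * Z)) := by rw [hWi1, hPdef]; simp [Matrix.mul_assoc]
    _ = 1 := by rw [hZ]; simp [hZ]
  have hUnit : IsUnit (Zᵀ * W * Z) := (Matrix.isUnit_iff_isUnit_det _).mpr (Matrix.isUnit_det_of_right_inverse hAB)
  refine ⟨hUnit, ?_⟩
  have hinv : (Zᵀ * W * Z)⁻¹ = Zᵀ * W⁻¹ * Z := Matrix.inv_eq_right_inv hAB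
  rw [hinv]
  calc P * W⁻¹ = P * P * W⁻¹ := by rw [hP2]
  _ = P * (W⁻¹ * P) := by rw [← hPWi]; noncomm_ring
  _ = P * (P * W⁻¹) := by rw [hPWi]
  _ = Z * (Zᵀ * W⁻¹ * Z) * Zᵀ := by rw [hPWi, hPdef]; simp only [Matrix.mul_assoc]
end
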